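/- arXiv:1312.4444 — 3 statements merged into one kernel-verified Lean document; each statement's English description precedes it below -/
import Mathlib

section
/- Let L > 0, T > 0, b ∈ ℝ, h ≥ 0. Let g : ℝ → ℝ be continuously differentiable, let a₁, a₂ : ℝ × [0,L] → ℝ be continuously differentiable and bounded, let a₀ : ℝ × [0,L] → ℝ be continuous and bounded, and let f : [0,T] × ℝ × [0,L] → ℝ be continuous. Let u : [0,T] × ℝ × [0,L] → ℝ be infinitely differentiable, vanishing whenever |x| ≥ R for some R > 0, satisfying u(t,x,0) = u(t,x,L) = u_yy(t,x,0) = u_yy(t,x,L) = 0 for all t, x, and satisfying pointwise the equation u_t + b u_x + u_xxx + u_xyy + h(u_xxxx + u_yyyy) + (g(u))_x − (a₁ u_x)_x − (a₂ u_y)_y + a₀ u = f. Then for every t ∈ [0,T]: ∬_Σ u²(t) dx dy + 2h ∫₀^t ∬_Σ (u_xx² + u_yy²) dx dy dτ + 2 ∫₀^t ∬_Σ ( a₁ u_x² + a₂ u_y² + a₀ u² ) dx dy dτ = ∬_Σ u²(0) dx dy + 2 ∫₀^t ∬_Σ f u dx dy dτ. -/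
open MeasureTheory Real Set

noncomputable section

/-- Partial derivative in the time variable. -/
def Dt (u : ℝ → ℝ → ℝ → ℝ) (t x y : ℝ) : ℝ := deriv (fun s => u s x y) t

/-- Partial derivative in `x`. -/
def Dx (u : ℝ → ℝ → ℝ → ℝ) (t x y : ℝ) : ℝ := deriv (fun s => u t s y) x

/-- Partial derivative in `y`. -/
def Dy (u : ℝ → ℝ → ℝ → ℝ) (t x y : ℝ) : ℝ := deriv (fun s => u t x s) y

namespace ZK

abbrev unc (u : ℝ → ℝ → ℝ → ℝ) : ℝ × ℝ × ℝ → ℝ := fun p => u p.1 p.2.1 p.2.2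

variable {u w : ℝ → ℝ → ℝ → ℝ}

lemma hasDerivAt_T (hd : Differentiable ℝ (unc u)) (t x y : ℝ) :
    HasDerivAt (fun s => u s x y) (Dt u t x y) t :=
  ((hd.comp ((differentiable_id).prodMk
    ((differentiable_const _).prodMk (differentiable_const _)))) t).hasDerivAt

lemma hasDerivAt_X (hd : Differentiable ℝ (unc u)) (t x y : ℝ) :
    HasDerivAt (fun s => u t s y) (Dx u t x y) x :=
  ((hd.comp ((differentiable_const _).prodMk
    ((differentiable_id).prodMk (differentiable_const _)))) x).hasDerivAt

lemma hasDerivAt_Y (hd : Differentiable ℝ (unc u)) (t x y : ℝ) :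
    HasDerivAt (fun s => u t x s) (Dy u t x y) y :=
  ((hd.comp ((differentiable_const _).prodMk
    ((differentiable_const _).prodMk (differentiable_id)))) y).hasDerivAt

lemma Dt_eq_fderiv (hd : Differentiable ℝ (unc u)) (t x y : ℝ) :
    Dt u t x y = fderiv ℝ (unc u) (t, x, y) (1, 0, 0) := by
  have hc : HasDerivAt (fun s : ℝ => (s, x, y)) ((1:ℝ), (0:ℝ), (0:ℝ)) t :=
    (hasDerivAt_id t).prodMk ((hasDerivAt_const t x).prodMk (hasDerivAt_const t y))
  exact ((hd (t, x, y)).hasFDerivAt.comp_hasDerivAt t hc).deriv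

lemma Dx_eq_fderiv (hd : Differentiable ℝ (unc u)) (t x y : ℝ) :
    Dx u t x y = fderiv ℝ (unc u) (t, x, y) (0, 1, 0) := by
  have hc : HasDerivAt (fun s : ℝ => (t, s, y)) ((0:ℝ), (1:ℝ), (0:ℝ)) x :=
    (hasDerivAt_const x t).prodMk ((hasDerivAt_id x).prodMk (hasDerivAt_const x y))
  exact ((hd (t, x, y)).hasFDerivAt.comp_hasDerivAt x hc).deriv

lemma Dy_eq_fderiv (hd : Differentiable ℝ (unc u)) (t x y : ℝ) :
    Dy u t x y = fderiv ℝ (unc u) (t, x, y) (0, 0, 1) := by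
  have hc : HasDerivAt (fun s : ℝ => (t, x, s)) ((0:ℝ), (0:ℝ), (1:ℝ)) y :=
    (hasDerivAt_const y t).prodMk ((hasDerivAt_const y x).prodMk (hasDerivAt_id y))
  exact ((hd (t, x, y)).hasFDerivAt.comp_hasDerivAt y hc).deriv

lemma contDiff_Dt (hu : ContDiff ℝ (⊤:ℕ∞) (unc u)) :
    ContDiff ℝ (⊤:ℕ∞) (unc (Dt u)) := by
  have he : unc (Dt u) = fun p : ℝ × ℝ × ℝ => fderiv ℝ (unc u) p (1, 0, 0) := by
    funext p
    exact Dt_eq_fderiv (hu.differentiable (by simp)) p.1 p.2.1 p.2.2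
  rw [he]
  exact (hu.fderiv_right (by exact_mod_cast le_top)).clm_apply contDiff_const

lemma contDiff_Dx (hu : ContDiff ℝ (⊤:ℕ∞) (unc u)) :
    ContDiff ℝ (⊤:ℕ∞) (unc (Dx u)) := by
  have he : unc (Dx u) = fun p : ℝ × ℝ × ℝ => fderiv ℝ (unc u) p (0, 1, 0) := by
    funext p
    exact Dx_eq_fderiv (hu.differentiable (by simp)) p.1 p.2.1 p.2.2
  rw [he]
  exact (hu.fderiv_right (by exact_mod_cast le_top)).clm_apply contDiff_const

lemma contDiff_Dy (hu : ContDiff ℝ (⊤:ℕ∞) (unc u)) :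
    ContDiff ℝ (⊤:ℕ∞) (unc (Dy u)) := by
  have he : unc (Dy u) = fun p : ℝ × ℝ × ℝ => fderiv ℝ (unc u) p (0, 0, 1) := by
    funext p
    exact Dy_eq_fderiv (hu.differentiable (by simp)) p.1 p.2.1 p.2.2
  rw [he]
  exact (hu.fderiv_right (by exact_mod_cast le_top)).clm_apply contDiff_const

lemma continuous_Dx_one (hw : ContDiff ℝ 1 (unc w)) : Continuous (unc (Dx w)) := by
  have he : unc (Dx w) = fun p : ℝ × ℝ × ℝ => fderiv ℝ (unc w) p (0, 1, 0) := by
    funext p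
    exact Dx_eq_fderiv (hw.differentiable one_ne_zero) p.1 p.2.1 p.2.2
  rw [he]
  exact ((contDiff_zero.1 (hw.fderiv_right (by norm_num)))).clm_apply continuous_const

lemma continuous_Dy_one (hw : ContDiff ℝ 1 (unc w)) : Continuous (unc (Dy w)) := by
  have he : unc (Dy w) = fun p : ℝ × ℝ × ℝ => fderiv ℝ (unc w) p (0, 0, 1) := by
    funext p
    exact Dy_eq_fderiv (hw.differentiable one_ne_zero) p.1 p.2.1 p.2.2
  rw [he]
  exact ((contDiff_zero.1 (hw.fderiv_right (by norm_num)))).clm_apply continuous_const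

lemma Dx_Dy_comm (hw : ContDiff ℝ (⊤:ℕ∞) (unc w)) (t x y : ℝ) :
    Dx (Dy w) t x y = Dy (Dx w) t x y := by
  set W := unc w with hW
  have hdW : Differentiable ℝ W := hw.differentiable (by simp)
  have hfd : ContDiff ℝ (⊤:ℕ∞) (fderiv ℝ W) := hw.fderiv_right (by exact_mod_cast le_top)
  have hdfW : Differentiable ℝ (fderiv ℝ W) := hfd.differentiable (by simp)
  have hsymm := second_derivative_symmetric (𝕜 := ℝ)
    (fun q => (hdW q).hasFDerivAt) ((hdfW (t,x,y)).hasFDerivAt)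
  have h1 : Dx (Dy w) t x y
      = (fderiv ℝ (fderiv ℝ W) (t,x,y) (0,1,0)) (0,0,1) := by
    have hc : HasDerivAt (fun s : ℝ => ((t, s, y) : ℝ × ℝ × ℝ)) ((0:ℝ), (1:ℝ), (0:ℝ)) x :=
      (hasDerivAt_const x t).prodMk ((hasDerivAt_id x).prodMk (hasDerivAt_const x y))
    have h2 : HasDerivAt (fun s : ℝ => fderiv ℝ W (t, s, y))
        (fderiv ℝ (fderiv ℝ W) (t,x,y) (0,1,0)) x :=
      (hdfW (t,x,y)).hasFDerivAt.comp_hasDerivAt x hc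
    have h3 : HasDerivAt (fun s : ℝ => fderiv ℝ W (t, s, y) ((0:ℝ),(0:ℝ),(1:ℝ)))
        ((fderiv ℝ (fderiv ℝ W) (t,x,y) (0,1,0)) (0,0,1)) x := by
      simpa using h2.clm_apply (hasDerivAt_const x ((0:ℝ),(0:ℝ),(1:ℝ)))
    have h4 : (fun s : ℝ => Dy w t s y)
        = fun s : ℝ => fderiv ℝ W (t, s, y) ((0:ℝ),(0:ℝ),(1:ℝ)) := by
      funext s; exact Dy_eq_fderiv hdW t s y
    show deriv (fun s : ℝ => Dy w t s y) x = _
    rw [h4]; exact h3.deriv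
  have h1' : Dy (Dx w) t x y
      = (fderiv ℝ (fderiv ℝ W) (t,x,y) (0,0,1)) (0,1,0) := by
    have hc : HasDerivAt (fun s : ℝ => ((t, x, s) : ℝ × ℝ × ℝ)) ((0:ℝ), (0:ℝ), (1:ℝ)) y :=
      (hasDerivAt_const y t).prodMk ((hasDerivAt_const y x).prodMk (hasDerivAt_id y))
    have h2 : HasDerivAt (fun s : ℝ => fderiv ℝ W (t, x, s))
        (fderiv ℝ (fderiv ℝ W) (t,x,y) (0,0,1)) y :=
      (hdfW (t,x,y)).hasFDerivAt.comp_hasDerivAt y hc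
    have h3 : HasDerivAt (fun s : ℝ => fderiv ℝ W (t, x, s) ((0:ℝ),(1:ℝ),(0:ℝ)))
        ((fderiv ℝ (fderiv ℝ W) (t,x,y) (0,0,1)) (0,1,0)) y := by
      simpa using h2.clm_apply (hasDerivAt_const y ((0:ℝ),(1:ℝ),(0:ℝ)))
    have h4 : (fun s : ℝ => Dx w t x s)
        = fun s : ℝ => fderiv ℝ W (t, x, s) ((0:ℝ),(1:ℝ),(0:ℝ)) := by
      funext s; exact Dx_eq_fderiv hdW t x s
    show deriv (fun s : ℝ => Dx w t x s) y = _
    rw [h4]; exact h3.deriv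
  rw [h1, h1', hsymm]

lemma supp_Dt {S : ℝ} (hs : ∀ t x y : ℝ, S < |x| → w t x y = 0) :
    ∀ t x y : ℝ, S < |x| → Dt w t x y = 0 := by
  intro t x y hx
  have he : (fun s => w s x y) = fun _ => (0:ℝ) := funext fun s => hs s x y hx
  simp [Dt, he]

lemma supp_Dy {S : ℝ} (hs : ∀ t x y : ℝ, S < |x| → w t x y = 0) :
    ∀ t x y : ℝ, S < |x| → Dy w t x y = 0 := by
  intro t x y hx
  have he : (fun s => w t x s) = fun _ => (0:ℝ) := funext fun s => hs t x s hx
  simp [Dy, he]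

lemma supp_Dx {S : ℝ} (hs : ∀ t x y : ℝ, S < |x| → w t x y = 0) :
    ∀ t x y : ℝ, S < |x| → Dx w t x y = 0 := by
  intro t x y hx
  have hev : (fun s => w t s y) =ᶠ[nhds x] (fun _ => (0:ℝ)) := by
    have hop : IsOpen {s : ℝ | S < |s|} := isOpen_lt continuous_const continuous_abs
    filter_upwards [hop.mem_nhds hx] with s hso using hs t s y hso
  show deriv (fun s => w t s y) x = 0
  rw [hev.deriv_eq]; simp

def μL (L : ℝ) : Measure (ℝ × ℝ) :=
  (volume : Measure ℝ).prod ((volume : Measure ℝ).restrict (Ioo 0 L))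

lemma ae_strip (L : ℝ) : ∀ᵐ p : ℝ × ℝ ∂(μL L), p.2 ∈ Ioo 0 L := by
  rw [ae_iff]
  have hsub : {p : ℝ × ℝ | ¬ p.2 ∈ Ioo 0 L} ⊆ (univ : Set ℝ) ×ˢ (Ioo 0 L)ᶜ := by
    intro p hp; exact ⟨trivial, hp⟩
  refine measure_mono_null hsub ?_
  rw [μL, Measure.prod_prod]
  simp [Measure.restrict_apply, measurableSet_Ioo.compl]

def Kxy (S L : ℝ) : Set (ℝ × ℝ) := Icc (-(S+1)) (S+1) ×ˢ Icc 0 L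

lemma Kxy_meas (S L : ℝ) : MeasurableSet (Kxy S L) := measurableSet_Icc.prod measurableSet_Icc

lemma Kxy_compact (S L : ℝ) : IsCompact (Kxy S L) := isCompact_Icc.prod isCompact_Icc

lemma Kxy_ne_top (S L : ℝ) : μL L (Kxy S L) ≠ ⊤ := by
  rw [μL, Kxy, Measure.prod_prod]
  refine ENNReal.mul_ne_top measure_Icc_lt_top.ne ?_
  rw [Measure.restrict_apply measurableSet_Icc]
  exact (lt_of_le_of_lt (measure_mono Set.inter_subset_right) measure_Ioo_lt_top).ne

lemma integrable_strip {L S : ℝ} (hS : 0 ≤ S) {F : ℝ × ℝ → ℝ}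
    (hF : Continuous F) (h0 : ∀ p : ℝ × ℝ, S < |p.1| → F p = 0) :
    Integrable F (μL L) := by
  have hae : F =ᵐ[μL L] (Kxy S L).indicator F := by
    filter_upwards [ae_strip L] with p hp
    by_cases hx : |p.1| ≤ S + 1
    · have hpK : p ∈ Kxy S L := ⟨abs_le.1 hx, ⟨le_of_lt hp.1, le_of_lt hp.2⟩⟩
      rw [Set.indicator_of_mem hpK]
    · push_neg at hx
      have hF0 : F p = 0 := h0 p (lt_of_le_of_lt (by linarith) hx)
      have hpK : p ∉ Kxy S L := fun hpK => hx.not_ge (abs_le.2 hpK.1)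
      rw [Set.indicator_of_notMem hpK, hF0]
  rw [integrable_congr hae, integrable_indicator_iff (Kxy_meas S L)]
  obtain ⟨C, hC⟩ := (Kxy_compact S L).exists_bound_of_continuousOn hF.continuousOn
  exact Measure.integrableOn_of_bounded (M := C) (Kxy_ne_top S L) hF.aestronglyMeasurable
    ((ae_restrict_iff' (Kxy_meas S L)).2 (Filter.Eventually.of_forall fun p hp => hC p hp))

lemma integral_deriv_zero_x {S : ℝ} (hS : 0 ≤ S) {φ ψ : ℝ → ℝ}
    (hd : ∀ x, HasDerivAt φ (ψ x) x) (hc : Continuous ψ)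
    (h0 : ∀ x, S < |x| → φ x = 0) : ∫ x, ψ x = 0 := by
  have hψ0 : ∀ x, S < |x| → ψ x = 0 := by
    intro x hx
    have hev : φ =ᶠ[nhds x] (fun _ => (0:ℝ)) := by
      have hop : IsOpen {s : ℝ | S < |s|} := isOpen_lt continuous_const continuous_abs
      filter_upwards [hop.mem_nhds hx] with s hso using h0 s hso
    rw [← (hd x).deriv, hev.deriv_eq]; simp
  have h1 : ∫ x, ψ x = ∫ x in Ioc (-(S+1)) (S+1), ψ x := by
    refine (setIntegral_eq_integral_of_forall_compl_eq_zero ?_).symm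
    intro x hx
    simp only [mem_Ioc, not_and_or, not_lt, not_le] at hx
    rcases hx with hle | hgt
    · refine hψ0 x (lt_of_lt_of_le (show S < S + 1 by linarith) ?_)
      exact le_trans (by linarith) (neg_le_abs x)
    · exact hψ0 x (lt_of_lt_of_le (by linarith : S < S + 1)
        (le_trans (le_of_lt hgt) (le_abs_self x)))
  rw [h1, ← intervalIntegral.integral_of_le (by linarith : -(S+1) ≤ S+1)]
  rw [intervalIntegral.integral_eq_sub_of_hasDerivAt (fun x _ => hd x)
    (hc.intervalIntegrable _ _)]
  rw [h0 (S+1) (by rw [abs_of_nonneg (by linarith)]; linarith),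
    h0 (-(S+1)) (by rw [abs_of_nonpos (by linarith)]; linarith)]
  ring

lemma integral_Ioo_deriv {L : ℝ} (hL : 0 ≤ L) {φ ψ : ℝ → ℝ}
    (hd : ∀ y, HasDerivAt φ (ψ y) y) (hc : Continuous ψ) :
    ∫ y in Ioo (0:ℝ) L, ψ y = φ L - φ 0 := by
  rw [← integral_Ioc_eq_integral_Ioo, ← intervalIntegral.integral_of_le hL]
  exact intervalIntegral.integral_eq_sub_of_hasDerivAt (fun x _ => hd x)
    (hc.intervalIntegrable _ _)

lemma cont_param {L S : ℝ} (hS : 0 ≤ S) {W : ℝ → ℝ × ℝ → ℝ}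
    (hW : Continuous (fun q : ℝ × (ℝ × ℝ) => W q.1 q.2))
    (h0 : ∀ (t : ℝ) (p : ℝ × ℝ), S < |p.1| → W t p = 0) :
    Continuous (fun t => ∫ p, W t p ∂(μL L)) := by
  rw [continuous_iff_continuousAt]
  intro τ
  obtain ⟨C, hC⟩ := ((isCompact_Icc (a := τ - 1) (b := τ + 1)).prod
    (Kxy_compact S L)).exists_bound_of_continuousOn hW.continuousOn
  set C' := max C 0 with hC'
  refine continuousAt_of_dominated (bound := (Kxy S L).indicator fun _ => C')
    (Filter.Eventually.of_forall fun t =>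
      (hW.comp (Continuous.prodMk_right t)).aestronglyMeasurable) ?_ ?_ ?_
  · filter_upwards [Icc_mem_nhds (by linarith : τ - 1 < τ) (by linarith : τ < τ + 1)] with t ht
    filter_upwards [ae_strip L] with p hp
    by_cases hx : |p.1| ≤ S + 1
    · have hpK : p ∈ Kxy S L := ⟨abs_le.1 hx, ⟨le_of_lt hp.1, le_of_lt hp.2⟩⟩
      rw [Set.indicator_of_mem hpK]
      exact le_trans (hC (t, p) ⟨ht, hpK⟩) (le_max_left _ _)
    · push_neg at hx
      rw [h0 t p (by linarith)]
      simpa using Set.indicator_nonneg (fun _ _ => le_max_right C 0) p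
  · rw [integrable_indicator_iff (Kxy_meas S L)]
    exact integrableOn_const (Kxy_ne_top S L)
  · exact Filter.Eventually.of_forall fun p =>
      (hW.comp (continuous_id.prodMk continuous_const)).continuousAt

lemma hasDerivAt_param {L S : ℝ} (hS : 0 ≤ S) {W W' : ℝ → ℝ × ℝ → ℝ} {τ : ℝ}
    (hW : Continuous (fun q : ℝ × (ℝ × ℝ) => W q.1 q.2))
    (hW' : Continuous (fun q : ℝ × (ℝ × ℝ) => W' q.1 q.2))
    (h0 : ∀ (t : ℝ) (p : ℝ × ℝ), S < |p.1| → W t p = 0)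
    (h0' : ∀ (t : ℝ) (p : ℝ × ℝ), S < |p.1| → W' t p = 0)
    (hdiff : ∀ (t : ℝ) (p : ℝ × ℝ), HasDerivAt (fun s => W s p) (W' t p) t) :
    HasDerivAt (fun t => ∫ p, W t p ∂(μL L)) (∫ p, W' τ p ∂(μL L)) τ := by
  obtain ⟨C, hC⟩ := ((isCompact_Icc (a := τ - 1) (b := τ + 1)).prod
    (Kxy_compact S L)).exists_bound_of_continuousOn hW'.continuousOn
  set C' := max C 0 with hC'
  have hint : ∀ t : ℝ, Integrable (W t) (μL L) := fun t =>
    integrable_strip hS (hW.comp (Continuous.prodMk_right t)) (h0 t)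
  refine (hasDerivAt_integral_of_dominated_loc_of_deriv_le
    (F := W) (F' := W') (bound := (Kxy S L).indicator fun _ => C')
    (Metric.ball_mem_nhds τ one_pos)
    (Filter.Eventually.of_forall fun t =>
      (hW.comp (Continuous.prodMk_right t)).aestronglyMeasurable)
    (hint τ)
    ((hW'.comp (Continuous.prodMk_right τ)).aestronglyMeasurable)
    ?_ ?_ ?_).2
  · filter_upwards [ae_strip L] with p hp
    intro t ht
    have ht' : t ∈ Icc (τ - 1) (τ + 1) := by
      rw [Metric.mem_ball, Real.dist_eq] at ht
      constructor
      · linarith [(abs_le.1 (le_of_lt ht)).1]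
      · linarith [(abs_le.1 (le_of_lt ht)).2]
    by_cases hx : |p.1| ≤ S + 1
    · have hpK : p ∈ Kxy S L := ⟨abs_le.1 hx, ⟨le_of_lt hp.1, le_of_lt hp.2⟩⟩
      rw [Set.indicator_of_mem hpK]
      exact le_trans (hC (t, p) ⟨ht', hpK⟩) (le_max_left _ _)
    · push_neg at hx
      rw [h0' t p (by linarith)]
      simpa using Set.indicator_nonneg (fun _ _ => le_max_right C 0) p
  · rw [integrable_indicator_iff (Kxy_meas S L)]
    exact integrableOn_const (Kxy_ne_top S L)
  · exact Filter.Eventually.of_forall fun p t _ => hdiff t p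

lemma integral_eq_iterated {L S : ℝ} (hS : 0 ≤ S) {F : ℝ × ℝ → ℝ}
    (hF : Continuous F) (h0 : ∀ p : ℝ × ℝ, S < |p.1| → F p = 0) :
    ∫ p, F p ∂(μL L) = ∫ x : ℝ, ∫ y in Ioo (0:ℝ) L, F (x, y) :=
  MeasureTheory.integral_prod F (integrable_strip hS hF h0)

lemma integral_eq_iterated_symm {L S : ℝ} (hS : 0 ≤ S) {F : ℝ × ℝ → ℝ}
    (hF : Continuous F) (h0 : ∀ p : ℝ × ℝ, S < |p.1| → F p = 0) :
    ∫ p, F p ∂(μL L) = ∫ y in Ioo (0:ℝ) L, ∫ x : ℝ, F (x, y) :=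
  MeasureTheory.integral_prod_symm F (integrable_strip hS hF h0)

lemma inner_x_zero {L S : ℝ} (hS : 0 ≤ S) {F : ℝ × ℝ → ℝ}
    (hF : Continuous F) (h0 : ∀ p : ℝ × ℝ, S < |p.1| → F p = 0)
    (hinner : ∀ y ∈ Ioo (0:ℝ) L, (∫ x : ℝ, F (x, y)) = 0) :
    ∫ p, F p ∂(μL L) = 0 := by
  rw [integral_eq_iterated_symm hS hF h0]
  calc ∫ y in Ioo (0:ℝ) L, ∫ x : ℝ, F (x, y)
      = ∫ _y in Ioo (0:ℝ) L, (0:ℝ) :=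
        setIntegral_congr_fun measurableSet_Ioo (fun y hy => hinner y hy)
    _ = 0 := by simp

lemma inner_y_zero {L S : ℝ} (hS : 0 ≤ S) {F : ℝ × ℝ → ℝ}
    (hF : Continuous F) (h0 : ∀ p : ℝ × ℝ, S < |p.1| → F p = 0)
    (hinner : ∀ x : ℝ, (∫ y in Ioo (0:ℝ) L, F (x, y)) = 0) :
    ∫ p, F p ∂(μL L) = 0 := by
  rw [integral_eq_iterated hS hF h0]
  calc ∫ x : ℝ, ∫ y in Ioo (0:ℝ) L, F (x, y)
      = ∫ _x : ℝ, (0:ℝ) :=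
        MeasureTheory.integral_congr_ae (Filter.Eventually.of_forall fun x => hinner x)
    _ = 0 := by simp

end ZK

theorem HasDerivAt.congr_d {f : ℝ → ℝ} {a b x : ℝ} (h : HasDerivAt f a x) (hab : a = b) :
    HasDerivAt f b x := hab ▸ h

/-- `L²` energy identity for smooth solutions of the regularized generalized
Zakharov–Kuznetsov equation with damping coefficients `a₀, a₁, a₂`. -/
theorem regularized_energy_identity (L T b h : ℝ) (hL : 0 < L) (hT : 0 < T) (hh : 0 ≤ h)
    (g : ℝ → ℝ) (hg : ContDiff ℝ 1 g)
    (a₁ a₂ : ℝ → ℝ → ℝ) (a₀ : ℝ → ℝ → ℝ) (f : ℝ → ℝ → ℝ → ℝ)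
    (ha₁ : ContDiff ℝ 1 (fun p : ℝ × ℝ => a₁ p.1 p.2))
    (ha₂ : ContDiff ℝ 1 (fun p : ℝ × ℝ => a₂ p.1 p.2))
    (ha₀ : Continuous (fun p : ℝ × ℝ => a₀ p.1 p.2))
    (ha₁b : ∃ M : ℝ, ∀ x y : ℝ, |a₁ x y| ≤ M)
    (ha₂b : ∃ M : ℝ, ∀ x y : ℝ, |a₂ x y| ≤ M)
    (ha₀b : ∃ M : ℝ, ∀ x y : ℝ, |a₀ x y| ≤ M)
    (hf : Continuous (fun p : ℝ × ℝ × ℝ => f p.1 p.2.1 p.2.2))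
    (u : ℝ → ℝ → ℝ → ℝ)
    (hu : ContDiff ℝ (⊤ : ℕ∞) (fun p : ℝ × ℝ × ℝ => u p.1 p.2.1 p.2.2))
    (hsupp : ∃ R > 0, ∀ t x y : ℝ, R ≤ |x| → u t x y = 0)
    (hbc0 : ∀ t x : ℝ, u t x 0 = 0) (hbcL : ∀ t x : ℝ, u t x L = 0)
    (hbcyy0 : ∀ t x : ℝ, Dy (Dy u) t x 0 = 0) (hbcyyL : ∀ t x : ℝ, Dy (Dy u) t x L = 0)
    (heq : ∀ t ∈ Icc (0:ℝ) T, ∀ x : ℝ, ∀ y ∈ Icc (0:ℝ) L,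
      Dt u t x y + b * Dx u t x y + Dx (Dx (Dx u)) t x y + Dx (Dy (Dy u)) t x y
          + h * (Dx (Dx (Dx (Dx u))) t x y + Dy (Dy (Dy (Dy u))) t x y)
          + deriv g (u t x y) * Dx u t x y
          - Dx (fun t x y => a₁ x y * Dx u t x y) t x y
          - Dy (fun t x y => a₂ x y * Dy u t x y) t x y
          + a₀ x y * u t x y
        = f t x y) :
    ∀ t ∈ Icc (0:ℝ) T,
      (∫ x : ℝ, ∫ y in Ioo (0:ℝ) L, (u t x y) ^ 2)
        + 2 * h * (∫ τ in (0:ℝ)..t, ∫ x : ℝ, ∫ y in Ioo (0:ℝ) L,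
            ((Dx (Dx u) τ x y) ^ 2 + (Dy (Dy u) τ x y) ^ 2))
        + 2 * (∫ τ in (0:ℝ)..t, ∫ x : ℝ, ∫ y in Ioo (0:ℝ) L,
            (a₁ x y * (Dx u τ x y) ^ 2 + a₂ x y * (Dy u τ x y) ^ 2
              + a₀ x y * (u τ x y) ^ 2))
      = (∫ x : ℝ, ∫ y in Ioo (0:ℝ) L, (u 0 x y) ^ 2)
        + 2 * ∫ τ in (0:ℝ)..t, ∫ x : ℝ, ∫ y in Ioo (0:ℝ) L, f τ x y * u τ x y := by
  obtain ⟨R, hR0, hRs⟩ := hsupp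
  have hRnn : (0:ℝ) ≤ R := le_of_lt hR0
  have hLnn : (0:ℝ) ≤ L := le_of_lt hL
  set A1 : ℝ → ℝ → ℝ → ℝ := fun t x y => a₁ x y * Dx u t x y with hA1def
  set A2 : ℝ → ℝ → ℝ → ℝ := fun t x y => a₂ x y * Dy u t x y with hA2def
  -- smoothness of all iterated derivatives
  have hub : ContDiff ℝ (⊤:ℕ∞) (ZK.unc u) := hu
  have dd : ∀ {w : ℝ→ℝ→ℝ→ℝ}, ContDiff ℝ (⊤:ℕ∞) (ZK.unc w) → Differentiable ℝ (ZK.unc w) :=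
    fun hw => hw.differentiable (by simp)
  have hux := ZK.contDiff_Dx hub
  have huy := ZK.contDiff_Dy hub
  have hut := ZK.contDiff_Dt hub
  have huxx := ZK.contDiff_Dx hux
  have huyy := ZK.contDiff_Dy huy
  have huxxx := ZK.contDiff_Dx huxx
  have huyyy := ZK.contDiff_Dy huyy
  have huxxxx := ZK.contDiff_Dx huxxx
  have huyyyy := ZK.contDiff_Dy huyyy
  have huxy := ZK.contDiff_Dx huy
  have huxyy := ZK.contDiff_Dx huyy
  have hA1c : ContDiff ℝ 1 (ZK.unc A1) := by
    rw [hA1def]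
    exact (ha₁.comp contDiff_snd).mul (hux.of_le (by exact_mod_cast le_top))
  have hA2c : ContDiff ℝ 1 (ZK.unc A2) := by
    rw [hA2def]
    exact (ha₂.comp contDiff_snd).mul (huy.of_le (by exact_mod_cast le_top))
  have hDxA1cont : Continuous (ZK.unc (Dx A1)) := ZK.continuous_Dx_one hA1c
  have hDyA2cont : Continuous (ZK.unc (Dy A2)) := ZK.continuous_Dy_one hA2c
  -- supports
  have s_u : ∀ t x y : ℝ, R < |x| → u t x y = 0 := fun t x y hx => hRs t x y (le_of_lt hx)
  have s_ut := ZK.supp_Dt s_u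
  have s_ux := ZK.supp_Dx s_u
  have s_uy := ZK.supp_Dy s_u
  have s_uxx := ZK.supp_Dx s_ux
  have s_uyy := ZK.supp_Dy s_uy
  have s_uxxx := ZK.supp_Dx s_uxx
  have s_uyyy := ZK.supp_Dy s_uyy
  have s_uxxxx := ZK.supp_Dx s_uxxx
  have s_uyyyy := ZK.supp_Dy s_uyyy
  have s_uxy := ZK.supp_Dx s_uy
  have s_uxyy := ZK.supp_Dx s_uyy
  have s_A1 : ∀ t x y : ℝ, R < |x| → A1 t x y = 0 := by
    intro t x y hx; rw [hA1def]; simp [s_ux t x y hx]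
  have s_A2 : ∀ t x y : ℝ, R < |x| → A2 t x y = 0 := by
    intro t x y hx; rw [hA2def]; simp [s_uy t x y hx]
  have s_DxA1 := ZK.supp_Dx s_A1
  have s_DyA2 := ZK.supp_Dy s_A2
  -- the antiderivative of 2 s g'(s)
  have hgd : Continuous (deriv g) := hg.continuous_deriv le_rfl
  have hG : ∀ s : ℝ, HasDerivAt (fun r => ∫ q in (0:ℝ)..r, 2*q*deriv g q) (2*s*deriv g s) s :=
    fun s => (Continuous.integral_hasStrictDerivAt
      ((continuous_const.mul continuous_id).mul hgd) 0 s).hasDerivAt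
  -- continuity of the three energy integrals
  have cIA : Continuous (fun τ => ∫ p : ℝ × ℝ,
      ((Dx (Dx u) τ p.1 p.2) ^ 2 + (Dy (Dy u) τ p.1 p.2) ^ 2) ∂(ZK.μL L)) :=
    ZK.cont_param hRnn ((huxx.continuous.pow 2).add (huyy.continuous.pow 2))
      (fun τ p hx => by simp [s_uxx τ p.1 p.2 hx, s_uyy τ p.1 p.2 hx])
  have cIB : Continuous (fun τ => ∫ p : ℝ × ℝ,
      (a₁ p.1 p.2 * (Dx u τ p.1 p.2) ^ 2 + a₂ p.1 p.2 * (Dy u τ p.1 p.2) ^ 2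
        + a₀ p.1 p.2 * (u τ p.1 p.2) ^ 2) ∂(ZK.μL L)) :=
    ZK.cont_param hRnn
      ((((ha₁.continuous.comp continuous_snd).mul (hux.continuous.pow 2)).add
        ((ha₂.continuous.comp continuous_snd).mul (huy.continuous.pow 2))).add
        ((ha₀.comp continuous_snd).mul (hub.continuous.pow 2)))
      (fun τ p hx => by
        simp [s_ux τ p.1 p.2 hx, s_uy τ p.1 p.2 hx, s_u τ p.1 p.2 hx])
  have cIC : Continuous (fun τ => ∫ p : ℝ × ℝ,
      f τ p.1 p.2 * u τ p.1 p.2 ∂(ZK.μL L)) :=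
    ZK.cont_param hRnn (hf.mul hub.continuous)
      (fun τ p hx => by simp [s_u τ p.1 p.2 hx])
  -- derivative of the energy
  have hΦd : ∀ τ : ℝ, HasDerivAt (fun s => ∫ p : ℝ × ℝ, (u s p.1 p.2) ^ 2 ∂(ZK.μL L))
      (∫ p : ℝ × ℝ, 2 * u τ p.1 p.2 * Dt u τ p.1 p.2 ∂(ZK.μL L)) τ := by
    intro τ
    refine ZK.hasDerivAt_param (W := fun s p => (u s p.1 p.2) ^ 2)
      (W' := fun s p => 2 * u s p.1 p.2 * Dt u s p.1 p.2) hRnn (hub.continuous.pow 2)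
      ((continuous_const.mul hub.continuous).mul hut.continuous)
      (fun s p hx => by simp [s_u s p.1 p.2 hx])
      (fun s p hx => by simp [s_u s p.1 p.2 hx, s_ut s p.1 p.2 hx])
      (fun s p => ((ZK.hasDerivAt_T (dd hub) s p.1 p.2).pow 2).congr_d (by push_cast; ring))
  -- the key pointwise-in-time energy identity
  have key : ∀ τ ∈ Icc (0:ℝ) T,
      (∫ p : ℝ × ℝ, 2 * u τ p.1 p.2 * Dt u τ p.1 p.2 ∂(ZK.μL L))
        = 2 * (∫ p : ℝ × ℝ, f τ p.1 p.2 * u τ p.1 p.2 ∂(ZK.μL L))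
          - 2 * h * (∫ p : ℝ × ℝ,
              ((Dx (Dx u) τ p.1 p.2) ^ 2 + (Dy (Dy u) τ p.1 p.2) ^ 2) ∂(ZK.μL L))
          - 2 * (∫ p : ℝ × ℝ,
              (a₁ p.1 p.2 * (Dx u τ p.1 p.2) ^ 2 + a₂ p.1 p.2 * (Dy u τ p.1 p.2) ^ 2
                + a₀ p.1 p.2 * (u τ p.1 p.2) ^ 2) ∂(ZK.μL L)) := by
    intro τ hτ
    -- continuity helpers for slices at time τ
    have cP : ∀ {w : ℝ→ℝ→ℝ→ℝ}, Continuous (ZK.unc w) → Continuous (fun p : ℝ × ℝ => w τ p.1 p.2) :=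
      fun hw => hw.comp (Continuous.prodMk_right τ)
    have cX : ∀ {w : ℝ→ℝ→ℝ→ℝ}, Continuous (ZK.unc w) → ∀ y : ℝ,
        Continuous (fun x : ℝ => w τ x y) :=
      fun hw y => hw.comp (continuous_const.prodMk (continuous_id.prodMk continuous_const))
    have cY : ∀ {w : ℝ→ℝ→ℝ→ℝ}, Continuous (ZK.unc w) → ∀ x : ℝ,
        Continuous (fun z : ℝ => w τ x z) :=
      fun hw x => hw.comp (continuous_const.prodMk (continuous_const.prodMk continuous_id))
    -- the pointwise identity from the PDE
    have hae : (fun p : ℝ × ℝ => 2 * u τ p.1 p.2 * Dt u τ p.1 p.2) =ᵐ[ZK.μL L]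
        (fun p : ℝ × ℝ =>
          2 * (f τ p.1 p.2 * u τ p.1 p.2)
          - 2 * (u τ p.1 p.2 * (b * Dx u τ p.1 p.2))
          - 2 * (u τ p.1 p.2 * Dx (Dx (Dx u)) τ p.1 p.2)
          - 2 * (u τ p.1 p.2 * Dx (Dy (Dy u)) τ p.1 p.2)
          - h * (2 * (u τ p.1 p.2 * Dx (Dx (Dx (Dx u))) τ p.1 p.2))
          - h * (2 * (u τ p.1 p.2 * Dy (Dy (Dy (Dy u))) τ p.1 p.2))
          - 2 * (u τ p.1 p.2 * (deriv g (u τ p.1 p.2) * Dx u τ p.1 p.2))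
          + 2 * (u τ p.1 p.2 * Dx A1 τ p.1 p.2)
          + 2 * (u τ p.1 p.2 * Dy A2 τ p.1 p.2)
          - 2 * (a₀ p.1 p.2 * u τ p.1 p.2 ^ 2)) := by
      filter_upwards [ZK.ae_strip L] with p hp
      have hpde := heq τ hτ p.1 p.2 ⟨le_of_lt hp.1, le_of_lt hp.2⟩
      linear_combination (2 * u τ p.1 p.2) * hpde
    -- integrability of the individual terms
    have I1 : Integrable (fun p : ℝ × ℝ => 2 * (f τ p.1 p.2 * u τ p.1 p.2)) (ZK.μL L) :=
      ZK.integrable_strip hRnn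
        (continuous_const.mul ((hf.comp (Continuous.prodMk_right τ)).mul (cP hub.continuous)))
        (fun p hx => by simp [s_u τ p.1 p.2 hx])
    have I2 : Integrable (fun p : ℝ × ℝ => 2 * (u τ p.1 p.2 * (b * Dx u τ p.1 p.2))) (ZK.μL L) :=
      ZK.integrable_strip hRnn
        (continuous_const.mul ((cP hub.continuous).mul (continuous_const.mul (cP hux.continuous))))
        (fun p hx => by simp [s_u τ p.1 p.2 hx])
    have I3 : Integrable (fun p : ℝ × ℝ => 2 * (u τ p.1 p.2 * Dx (Dx (Dx u)) τ p.1 p.2)) (ZK.μL L) :=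
      ZK.integrable_strip hRnn
        (continuous_const.mul ((cP hub.continuous).mul (cP huxxx.continuous)))
        (fun p hx => by simp [s_u τ p.1 p.2 hx])
    have I4 : Integrable (fun p : ℝ × ℝ => 2 * (u τ p.1 p.2 * Dx (Dy (Dy u)) τ p.1 p.2)) (ZK.μL L) :=
      ZK.integrable_strip hRnn
        (continuous_const.mul ((cP hub.continuous).mul (cP huxyy.continuous)))
        (fun p hx => by simp [s_u τ p.1 p.2 hx])
    have I5 : Integrable (fun p : ℝ × ℝ =>
        h * (2 * (u τ p.1 p.2 * Dx (Dx (Dx (Dx u))) τ p.1 p.2))) (ZK.μL L) :=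
      ZK.integrable_strip hRnn
        (continuous_const.mul (continuous_const.mul ((cP hub.continuous).mul (cP huxxxx.continuous))))
        (fun p hx => by simp [s_u τ p.1 p.2 hx])
    have I6 : Integrable (fun p : ℝ × ℝ =>
        h * (2 * (u τ p.1 p.2 * Dy (Dy (Dy (Dy u))) τ p.1 p.2))) (ZK.μL L) :=
      ZK.integrable_strip hRnn
        (continuous_const.mul (continuous_const.mul ((cP hub.continuous).mul (cP huyyyy.continuous))))
        (fun p hx => by simp [s_u τ p.1 p.2 hx])
    have I7 : Integrable (fun p : ℝ × ℝ =>
        2 * (u τ p.1 p.2 * (deriv g (u τ p.1 p.2) * Dx u τ p.1 p.2))) (ZK.μL L) :=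
      ZK.integrable_strip hRnn
        (continuous_const.mul ((cP hub.continuous).mul
          ((hgd.comp (cP hub.continuous)).mul (cP hux.continuous))))
        (fun p hx => by simp [s_u τ p.1 p.2 hx])
    have I8 : Integrable (fun p : ℝ × ℝ => 2 * (u τ p.1 p.2 * Dx A1 τ p.1 p.2)) (ZK.μL L) :=
      ZK.integrable_strip hRnn
        (continuous_const.mul ((cP hub.continuous).mul (cP hDxA1cont)))
        (fun p hx => by simp [s_u τ p.1 p.2 hx])
    have I9 : Integrable (fun p : ℝ × ℝ => 2 * (u τ p.1 p.2 * Dy A2 τ p.1 p.2)) (ZK.μL L) :=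
      ZK.integrable_strip hRnn
        (continuous_const.mul ((cP hub.continuous).mul (cP hDyA2cont)))
        (fun p hx => by simp [s_u τ p.1 p.2 hx])
    have I10 : Integrable (fun p : ℝ × ℝ => 2 * (a₀ p.1 p.2 * u τ p.1 p.2 ^ 2)) (ZK.μL L) :=
      ZK.integrable_strip hRnn
        (continuous_const.mul (ha₀.mul ((cP hub.continuous).pow 2)))
        (fun p hx => by simp [s_u τ p.1 p.2 hx])
    have IQ4 : Integrable (fun p : ℝ × ℝ =>
        2 * (Dy u τ p.1 p.2 * Dx (Dy u) τ p.1 p.2)) (ZK.μL L) :=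
      ZK.integrable_strip hRnn
        (continuous_const.mul ((cP huy.continuous).mul (cP huxy.continuous)))
        (fun p hx => by simp [s_uy τ p.1 p.2 hx])
    have Ib5 : Integrable (fun p : ℝ × ℝ => 2 * Dx (Dx u) τ p.1 p.2 ^ 2) (ZK.μL L) :=
      ZK.integrable_strip hRnn (continuous_const.mul ((cP huxx.continuous).pow 2))
        (fun p hx => by simp [s_uxx τ p.1 p.2 hx])
    have Ib6 : Integrable (fun p : ℝ × ℝ => 2 * Dy (Dy u) τ p.1 p.2 ^ 2) (ZK.μL L) :=
      ZK.integrable_strip hRnn (continuous_const.mul ((cP huyy.continuous).pow 2))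
        (fun p hx => by simp [s_uyy τ p.1 p.2 hx])
    have Ik8 : Integrable (fun p : ℝ × ℝ => 2 * (a₁ p.1 p.2 * Dx u τ p.1 p.2 ^ 2)) (ZK.μL L) :=
      ZK.integrable_strip hRnn
        (continuous_const.mul (ha₁.continuous.mul ((cP hux.continuous).pow 2)))
        (fun p hx => by simp [s_ux τ p.1 p.2 hx])
    have Ik9 : Integrable (fun p : ℝ × ℝ => 2 * (a₂ p.1 p.2 * Dy u τ p.1 p.2 ^ 2)) (ZK.μL L) :=
      ZK.integrable_strip hRnn
        (continuous_const.mul (ha₂.continuous.mul ((cP huy.continuous).pow 2)))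
        (fun p hx => by simp [s_uy τ p.1 p.2 hx])
    have Ijxx : Integrable (fun p : ℝ × ℝ => (Dx (Dx u) τ p.1 p.2) ^ 2) (ZK.μL L) :=
      ZK.integrable_strip hRnn ((cP huxx.continuous).pow 2)
        (fun p hx => by simp [s_uxx τ p.1 p.2 hx])
    have Ijyy : Integrable (fun p : ℝ × ℝ => (Dy (Dy u) τ p.1 p.2) ^ 2) (ZK.μL L) :=
      ZK.integrable_strip hRnn ((cP huyy.continuous).pow 2)
        (fun p hx => by simp [s_uyy τ p.1 p.2 hx])
    have Ija1 : Integrable (fun p : ℝ × ℝ => a₁ p.1 p.2 * (Dx u τ p.1 p.2) ^ 2) (ZK.μL L) :=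
      ZK.integrable_strip hRnn (ha₁.continuous.mul ((cP hux.continuous).pow 2))
        (fun p hx => by simp [s_ux τ p.1 p.2 hx])
    have Ija2 : Integrable (fun p : ℝ × ℝ => a₂ p.1 p.2 * (Dy u τ p.1 p.2) ^ 2) (ZK.μL L) :=
      ZK.integrable_strip hRnn (ha₂.continuous.mul ((cP huy.continuous).pow 2))
        (fun p hx => by simp [s_uy τ p.1 p.2 hx])
    have Ija0 : Integrable (fun p : ℝ × ℝ => a₀ p.1 p.2 * (u τ p.1 p.2) ^ 2) (ZK.μL L) :=
      ZK.integrable_strip hRnn (ha₀.mul ((cP hub.continuous).pow 2))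
        (fun p hx => by simp [s_u τ p.1 p.2 hx])
    -- values of the individual integrals
    have V2 : (∫ p : ℝ × ℝ, 2 * (u τ p.1 p.2 * (b * Dx u τ p.1 p.2)) ∂(ZK.μL L)) = 0 := by
      refine ZK.inner_x_zero (F := fun p : ℝ × ℝ => 2 * (u τ p.1 p.2 * (b * Dx u τ p.1 p.2)))
        hRnn (continuous_const.mul ((cP hub.continuous).mul
          (continuous_const.mul (cP hux.continuous))))
        (fun p hx => by simp [s_u τ p.1 p.2 hx]) ?_
      intro y hy
      refine ZK.integral_deriv_zero_x (φ := fun x => b * (u τ x y) ^ 2) hRnn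
        (fun x => (((ZK.hasDerivAt_X (dd hub) τ x y).pow 2).const_mul b).congr_d
          (by push_cast; ring)) ?_ (fun x hx => by simp [s_u τ x y hx])
      exact continuous_const.mul ((cX hub.continuous y).mul
        (continuous_const.mul (cX hux.continuous y)))
    have V3 : (∫ p : ℝ × ℝ, 2 * (u τ p.1 p.2 * Dx (Dx (Dx u)) τ p.1 p.2) ∂(ZK.μL L)) = 0 := by
      refine ZK.inner_x_zero (F := fun p : ℝ × ℝ => 2 * (u τ p.1 p.2 * Dx (Dx (Dx u)) τ p.1 p.2))
        hRnn (continuous_const.mul ((cP hub.continuous).mul (cP huxxx.continuous)))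
        (fun p hx => by simp [s_u τ p.1 p.2 hx]) ?_
      intro y hy
      refine ZK.integral_deriv_zero_x
        (φ := fun x => 2 * (u τ x y * Dx (Dx u) τ x y) - Dx u τ x y ^ 2) hRnn
        (fun x => (((((ZK.hasDerivAt_X (dd hub) τ x y).mul
          (ZK.hasDerivAt_X (dd huxx) τ x y)).const_mul 2)).sub
          ((ZK.hasDerivAt_X (dd hux) τ x y).pow 2)).congr_d (by push_cast; ring)) ?_
        (fun x hx => by simp [s_u τ x y hx, s_ux τ x y hx])
      exact continuous_const.mul ((cX hub.continuous y).mul (cX huxxx.continuous y))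
    have V7 : (∫ p : ℝ × ℝ,
        2 * (u τ p.1 p.2 * (deriv g (u τ p.1 p.2) * Dx u τ p.1 p.2)) ∂(ZK.μL L)) = 0 := by
      refine ZK.inner_x_zero (F := fun p : ℝ × ℝ =>
          2 * (u τ p.1 p.2 * (deriv g (u τ p.1 p.2) * Dx u τ p.1 p.2)))
        hRnn (continuous_const.mul ((cP hub.continuous).mul
          ((hgd.comp (cP hub.continuous)).mul (cP hux.continuous))))
        (fun p hx => by simp [s_u τ p.1 p.2 hx]) ?_
      intro y hy
      refine ZK.integral_deriv_zero_x
        (φ := fun x => ∫ q in (0:ℝ)..(u τ x y), 2*q*deriv g q) hRnn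
        (fun x => by
          have hc := (hG (u τ x y)).comp x (ZK.hasDerivAt_X (dd hub) τ x y)
          exact hc.congr_d (by push_cast; ring)) ?_
        (fun x hx => by simp [s_u τ x y hx])
      exact continuous_const.mul ((cX hub.continuous y).mul
        ((hgd.comp (cX hub.continuous y)).mul (cX hux.continuous y)))
    -- the mixed third-derivative term
    have st4a : (∫ p : ℝ × ℝ, (2 * (u τ p.1 p.2 * Dx (Dy (Dy u)) τ p.1 p.2)
        + 2 * (Dy u τ p.1 p.2 * Dx (Dy u) τ p.1 p.2)) ∂(ZK.μL L)) = 0 := by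
      refine ZK.inner_y_zero (F := fun p : ℝ × ℝ =>
          2 * (u τ p.1 p.2 * Dx (Dy (Dy u)) τ p.1 p.2)
            + 2 * (Dy u τ p.1 p.2 * Dx (Dy u) τ p.1 p.2))
        hRnn ((continuous_const.mul ((cP hub.continuous).mul (cP huxyy.continuous))).add
          (continuous_const.mul ((cP huy.continuous).mul (cP huxy.continuous))))
        (fun p hx => by simp [s_u τ p.1 p.2 hx, s_uy τ p.1 p.2 hx]) ?_
      intro x
      have hid := ZK.integral_Ioo_deriv hLnn
        (φ := fun z => 2 * (u τ x z * Dx (Dy u) τ x z))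
        (ψ := fun z => 2 * (u τ x z * Dx (Dy (Dy u)) τ x z)
          + 2 * (Dy u τ x z * Dx (Dy u) τ x z))
        (fun z => (((ZK.hasDerivAt_Y (dd hub) τ x z).mul
          (ZK.hasDerivAt_Y (dd huxy) τ x z)).const_mul 2).congr_d
          (by beta_reduce; rw [ZK.Dx_Dy_comm huy τ x z]; ring))
        ((continuous_const.mul ((cY hub.continuous x).mul (cY huxyy.continuous x))).add
          (continuous_const.mul ((cY huy.continuous x).mul (cY huxy.continuous x))))
      exact hid.trans (by simp [hbc0 τ x, hbcL τ x])
    have st4b : (∫ p : ℝ × ℝ, 2 * (Dy u τ p.1 p.2 * Dx (Dy u) τ p.1 p.2) ∂(ZK.μL L)) = 0 := by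
      refine ZK.inner_x_zero (F := fun p : ℝ × ℝ => 2 * (Dy u τ p.1 p.2 * Dx (Dy u) τ p.1 p.2))
        hRnn (continuous_const.mul ((cP huy.continuous).mul (cP huxy.continuous)))
        (fun p hx => by simp [s_uy τ p.1 p.2 hx]) ?_
      intro y hy
      refine ZK.integral_deriv_zero_x (φ := fun x => (Dy u τ x y) ^ 2) hRnn
        (fun x => ((ZK.hasDerivAt_X (dd huy) τ x y).pow 2).congr_d (by push_cast; ring)) ?_
        (fun x hx => by simp [s_uy τ x y hx])
      exact continuous_const.mul ((cX huy.continuous y).mul (cX huxy.continuous y))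
    have h4add : (∫ p : ℝ × ℝ, (2 * (u τ p.1 p.2 * Dx (Dy (Dy u)) τ p.1 p.2)
          + 2 * (Dy u τ p.1 p.2 * Dx (Dy u) τ p.1 p.2)) ∂(ZK.μL L))
        = (∫ p : ℝ × ℝ, 2 * (u τ p.1 p.2 * Dx (Dy (Dy u)) τ p.1 p.2) ∂(ZK.μL L))
          + ∫ p : ℝ × ℝ, 2 * (Dy u τ p.1 p.2 * Dx (Dy u) τ p.1 p.2) ∂(ZK.μL L) :=
      MeasureTheory.integral_add I4 IQ4
    have V4 : (∫ p : ℝ × ℝ, 2 * (u τ p.1 p.2 * Dx (Dy (Dy u)) τ p.1 p.2) ∂(ZK.μL L)) = 0 := by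
      linarith [st4a, st4b, h4add]
    -- the fourth-order x term
    have st5 : (∫ p : ℝ × ℝ, (2 * (u τ p.1 p.2 * Dx (Dx (Dx (Dx u))) τ p.1 p.2)
        - 2 * Dx (Dx u) τ p.1 p.2 ^ 2) ∂(ZK.μL L)) = 0 := by
      refine ZK.inner_x_zero (F := fun p : ℝ × ℝ =>
          2 * (u τ p.1 p.2 * Dx (Dx (Dx (Dx u))) τ p.1 p.2) - 2 * Dx (Dx u) τ p.1 p.2 ^ 2)
        hRnn ((continuous_const.mul ((cP hub.continuous).mul (cP huxxxx.continuous))).sub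
          (continuous_const.mul ((cP huxx.continuous).pow 2)))
        (fun p hx => by simp [s_u τ p.1 p.2 hx, s_uxx τ p.1 p.2 hx]) ?_
      intro y hy
      refine ZK.integral_deriv_zero_x
        (φ := fun x => 2 * (u τ x y * Dx (Dx (Dx u)) τ x y)
          - 2 * (Dx u τ x y * Dx (Dx u) τ x y)) hRnn
        (fun x => ((((ZK.hasDerivAt_X (dd hub) τ x y).mul
            (ZK.hasDerivAt_X (dd huxxx) τ x y)).const_mul 2).sub
          (((ZK.hasDerivAt_X (dd hux) τ x y).mul
            (ZK.hasDerivAt_X (dd huxx) τ x y)).const_mul 2)).congr_d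
          (by push_cast; ring)) ?_
        (fun x hx => by simp [s_u τ x y hx, s_uxx τ x y hx])
      exact (continuous_const.mul ((cX hub.continuous y).mul (cX huxxxx.continuous y))).sub
        (continuous_const.mul ((cX huxx.continuous y).pow 2))
    have h5sub : (∫ p : ℝ × ℝ, (2 * (u τ p.1 p.2 * Dx (Dx (Dx (Dx u))) τ p.1 p.2)
          - 2 * Dx (Dx u) τ p.1 p.2 ^ 2) ∂(ZK.μL L))
        = (∫ p : ℝ × ℝ, 2 * (u τ p.1 p.2 * Dx (Dx (Dx (Dx u))) τ p.1 p.2) ∂(ZK.μL L))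
          - ∫ p : ℝ × ℝ, 2 * Dx (Dx u) τ p.1 p.2 ^ 2 ∂(ZK.μL L) :=
      MeasureTheory.integral_sub
        (ZK.integrable_strip hRnn
          (continuous_const.mul ((cP hub.continuous).mul (cP huxxxx.continuous)))
          (fun p hx => by simp [s_u τ p.1 p.2 hx])) Ib5
    have V5 : (∫ p : ℝ × ℝ,
        h * (2 * (u τ p.1 p.2 * Dx (Dx (Dx (Dx u))) τ p.1 p.2)) ∂(ZK.μL L))
        = h * ∫ p : ℝ × ℝ, 2 * (u τ p.1 p.2 * Dx (Dx (Dx (Dx u))) τ p.1 p.2) ∂(ZK.μL L) :=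
      MeasureTheory.integral_const_mul h _
    have c5 : (∫ p : ℝ × ℝ, 2 * Dx (Dx u) τ p.1 p.2 ^ 2 ∂(ZK.μL L))
        = 2 * ∫ p : ℝ × ℝ, (Dx (Dx u) τ p.1 p.2) ^ 2 ∂(ZK.μL L) :=
      MeasureTheory.integral_const_mul 2 _
    -- the fourth-order y term
    have st6 : (∫ p : ℝ × ℝ, (2 * (u τ p.1 p.2 * Dy (Dy (Dy (Dy u))) τ p.1 p.2)
        - 2 * Dy (Dy u) τ p.1 p.2 ^ 2) ∂(ZK.μL L)) = 0 := by
      refine ZK.inner_y_zero (F := fun p : ℝ × ℝ =>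
          2 * (u τ p.1 p.2 * Dy (Dy (Dy (Dy u))) τ p.1 p.2) - 2 * Dy (Dy u) τ p.1 p.2 ^ 2)
        hRnn ((continuous_const.mul ((cP hub.continuous).mul (cP huyyyy.continuous))).sub
          (continuous_const.mul ((cP huyy.continuous).pow 2)))
        (fun p hx => by simp [s_u τ p.1 p.2 hx, s_uyy τ p.1 p.2 hx]) ?_
      intro x
      have hid := ZK.integral_Ioo_deriv hLnn
        (φ := fun z => 2 * (u τ x z * Dy (Dy (Dy u)) τ x z)
          - 2 * (Dy u τ x z * Dy (Dy u) τ x z))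
        (ψ := fun z => 2 * (u τ x z * Dy (Dy (Dy (Dy u))) τ x z)
          - 2 * Dy (Dy u) τ x z ^ 2)
        (fun z => ((((ZK.hasDerivAt_Y (dd hub) τ x z).mul
            (ZK.hasDerivAt_Y (dd huyyy) τ x z)).const_mul 2).sub
          (((ZK.hasDerivAt_Y (dd huy) τ x z).mul
            (ZK.hasDerivAt_Y (dd huyy) τ x z)).const_mul 2)).congr_d
          (by push_cast; ring))
        ((continuous_const.mul ((cY hub.continuous x).mul (cY huyyyy.continuous x))).sub
          (continuous_const.mul ((cY huyy.continuous x).pow 2)))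
      exact hid.trans (by simp [hbc0 τ x, hbcL τ x, hbcyy0 τ x, hbcyyL τ x])
    have h6sub : (∫ p : ℝ × ℝ, (2 * (u τ p.1 p.2 * Dy (Dy (Dy (Dy u))) τ p.1 p.2)
          - 2 * Dy (Dy u) τ p.1 p.2 ^ 2) ∂(ZK.μL L))
        = (∫ p : ℝ × ℝ, 2 * (u τ p.1 p.2 * Dy (Dy (Dy (Dy u))) τ p.1 p.2) ∂(ZK.μL L))
          - ∫ p : ℝ × ℝ, 2 * Dy (Dy u) τ p.1 p.2 ^ 2 ∂(ZK.μL L) :=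
      MeasureTheory.integral_sub
        (ZK.integrable_strip hRnn
          (continuous_const.mul ((cP hub.continuous).mul (cP huyyyy.continuous)))
          (fun p hx => by simp [s_u τ p.1 p.2 hx])) Ib6
    have V6 : (∫ p : ℝ × ℝ,
        h * (2 * (u τ p.1 p.2 * Dy (Dy (Dy (Dy u))) τ p.1 p.2)) ∂(ZK.μL L))
        = h * ∫ p : ℝ × ℝ, 2 * (u τ p.1 p.2 * Dy (Dy (Dy (Dy u))) τ p.1 p.2) ∂(ZK.μL L) :=
      MeasureTheory.integral_const_mul h _
    have c6 : (∫ p : ℝ × ℝ, 2 * Dy (Dy u) τ p.1 p.2 ^ 2 ∂(ZK.μL L))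
        = 2 * ∫ p : ℝ × ℝ, (Dy (Dy u) τ p.1 p.2) ^ 2 ∂(ZK.μL L) :=
      MeasureTheory.integral_const_mul 2 _
    -- the a₁-term
    have st8 : (∫ p : ℝ × ℝ, (2 * (u τ p.1 p.2 * Dx A1 τ p.1 p.2)
        + 2 * (a₁ p.1 p.2 * Dx u τ p.1 p.2 ^ 2)) ∂(ZK.μL L)) = 0 := by
      refine ZK.inner_x_zero (F := fun p : ℝ × ℝ =>
          2 * (u τ p.1 p.2 * Dx A1 τ p.1 p.2) + 2 * (a₁ p.1 p.2 * Dx u τ p.1 p.2 ^ 2))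
        hRnn ((continuous_const.mul ((cP hub.continuous).mul (cP hDxA1cont))).add
          (continuous_const.mul (ha₁.continuous.mul ((cP hux.continuous).pow 2))))
        (fun p hx => by simp [s_u τ p.1 p.2 hx, s_ux τ p.1 p.2 hx]) ?_
      intro y hy
      refine ZK.integral_deriv_zero_x (φ := fun x => 2 * (u τ x y * A1 τ x y)) hRnn
        (fun x => (((ZK.hasDerivAt_X (dd hub) τ x y).mul
          (ZK.hasDerivAt_X (hA1c.differentiable one_ne_zero) τ x y)).const_mul 2).congr_d
          (by simp only [hA1def]; push_cast; ring)) ?_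
        (fun x hx => by simp [s_u τ x y hx])
      exact (continuous_const.mul ((cX hub.continuous y).mul (cX hDxA1cont y))).add
        (continuous_const.mul ((ha₁.continuous.comp (continuous_id.prodMk continuous_const)).mul
          ((cX hux.continuous y).pow 2)))
    have h8add : (∫ p : ℝ × ℝ, (2 * (u τ p.1 p.2 * Dx A1 τ p.1 p.2)
          + 2 * (a₁ p.1 p.2 * Dx u τ p.1 p.2 ^ 2)) ∂(ZK.μL L))
        = (∫ p : ℝ × ℝ, 2 * (u τ p.1 p.2 * Dx A1 τ p.1 p.2) ∂(ZK.μL L))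
          + ∫ p : ℝ × ℝ, 2 * (a₁ p.1 p.2 * Dx u τ p.1 p.2 ^ 2) ∂(ZK.μL L) :=
      MeasureTheory.integral_add I8 Ik8
    have c8 : (∫ p : ℝ × ℝ, 2 * (a₁ p.1 p.2 * Dx u τ p.1 p.2 ^ 2) ∂(ZK.μL L))
        = 2 * ∫ p : ℝ × ℝ, a₁ p.1 p.2 * (Dx u τ p.1 p.2) ^ 2 ∂(ZK.μL L) :=
      MeasureTheory.integral_const_mul 2 _
    -- the a₂-term
    have st9 : (∫ p : ℝ × ℝ, (2 * (u τ p.1 p.2 * Dy A2 τ p.1 p.2)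
        + 2 * (a₂ p.1 p.2 * Dy u τ p.1 p.2 ^ 2)) ∂(ZK.μL L)) = 0 := by
      refine ZK.inner_y_zero (F := fun p : ℝ × ℝ =>
          2 * (u τ p.1 p.2 * Dy A2 τ p.1 p.2) + 2 * (a₂ p.1 p.2 * Dy u τ p.1 p.2 ^ 2))
        hRnn ((continuous_const.mul ((cP hub.continuous).mul (cP hDyA2cont))).add
          (continuous_const.mul (ha₂.continuous.mul ((cP huy.continuous).pow 2))))
        (fun p hx => by simp [s_u τ p.1 p.2 hx, s_uy τ p.1 p.2 hx]) ?_
      intro x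
      have hid := ZK.integral_Ioo_deriv hLnn
        (φ := fun z => 2 * (u τ x z * A2 τ x z))
        (ψ := fun z => 2 * (u τ x z * Dy A2 τ x z) + 2 * (a₂ x z * Dy u τ x z ^ 2))
        (fun z => (((ZK.hasDerivAt_Y (dd hub) τ x z).mul
          (ZK.hasDerivAt_Y (hA2c.differentiable one_ne_zero) τ x z)).const_mul 2).congr_d
          (by simp only [hA2def]; push_cast; ring))
        ((continuous_const.mul ((cY hub.continuous x).mul (cY hDyA2cont x))).add
          (continuous_const.mul ((ha₂.continuous.comp (continuous_const.prodMk continuous_id)).mul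
            ((cY huy.continuous x).pow 2))))
      exact hid.trans (by simp [hbc0 τ x, hbcL τ x])
    have h9add : (∫ p : ℝ × ℝ, (2 * (u τ p.1 p.2 * Dy A2 τ p.1 p.2)
          + 2 * (a₂ p.1 p.2 * Dy u τ p.1 p.2 ^ 2)) ∂(ZK.μL L))
        = (∫ p : ℝ × ℝ, 2 * (u τ p.1 p.2 * Dy A2 τ p.1 p.2) ∂(ZK.μL L))
          + ∫ p : ℝ × ℝ, 2 * (a₂ p.1 p.2 * Dy u τ p.1 p.2 ^ 2) ∂(ZK.μL L) :=
      MeasureTheory.integral_add I9 Ik9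
    have c9 : (∫ p : ℝ × ℝ, 2 * (a₂ p.1 p.2 * Dy u τ p.1 p.2 ^ 2) ∂(ZK.μL L))
        = 2 * ∫ p : ℝ × ℝ, a₂ p.1 p.2 * (Dy u τ p.1 p.2) ^ 2 ∂(ZK.μL L) :=
      MeasureTheory.integral_const_mul 2 _
    -- remaining constant multiples
    have V1 : (∫ p : ℝ × ℝ, 2 * (f τ p.1 p.2 * u τ p.1 p.2) ∂(ZK.μL L))
        = 2 * ∫ p : ℝ × ℝ, f τ p.1 p.2 * u τ p.1 p.2 ∂(ZK.μL L) :=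
      MeasureTheory.integral_const_mul 2 _
    have V10 : (∫ p : ℝ × ℝ, 2 * (a₀ p.1 p.2 * u τ p.1 p.2 ^ 2) ∂(ZK.μL L))
        = 2 * ∫ p : ℝ × ℝ, a₀ p.1 p.2 * (u τ p.1 p.2) ^ 2 ∂(ZK.μL L) :=
      MeasureTheory.integral_const_mul 2 _
    -- splitting of the composite integrals on the right-hand side of the claim
    have HIA : (∫ p : ℝ × ℝ,
        ((Dx (Dx u) τ p.1 p.2) ^ 2 + (Dy (Dy u) τ p.1 p.2) ^ 2) ∂(ZK.μL L))
        = (∫ p : ℝ × ℝ, (Dx (Dx u) τ p.1 p.2) ^ 2 ∂(ZK.μL L))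
          + ∫ p : ℝ × ℝ, (Dy (Dy u) τ p.1 p.2) ^ 2 ∂(ZK.μL L) :=
      MeasureTheory.integral_add Ijxx Ijyy
    have HIB : (∫ p : ℝ × ℝ,
        (a₁ p.1 p.2 * (Dx u τ p.1 p.2) ^ 2 + a₂ p.1 p.2 * (Dy u τ p.1 p.2) ^ 2
          + a₀ p.1 p.2 * (u τ p.1 p.2) ^ 2) ∂(ZK.μL L))
        = ((∫ p : ℝ × ℝ, a₁ p.1 p.2 * (Dx u τ p.1 p.2) ^ 2 ∂(ZK.μL L))
          + ∫ p : ℝ × ℝ, a₂ p.1 p.2 * (Dy u τ p.1 p.2) ^ 2 ∂(ZK.μL L))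
          + ∫ p : ℝ × ℝ, a₀ p.1 p.2 * (u τ p.1 p.2) ^ 2 ∂(ZK.μL L) := by
      have IJ12 : Integrable (fun p : ℝ × ℝ =>
          a₁ p.1 p.2 * (Dx u τ p.1 p.2) ^ 2 + a₂ p.1 p.2 * (Dy u τ p.1 p.2) ^ 2) (ZK.μL L) :=
        Ija1.add Ija2
      rw [MeasureTheory.integral_add IJ12 Ija0, MeasureTheory.integral_add Ija1 Ija2]
    -- annotated prefix integrabilities
    have P2 : Integrable (fun p : ℝ × ℝ => 2 * (f τ p.1 p.2 * u τ p.1 p.2)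
        - 2 * (u τ p.1 p.2 * (b * Dx u τ p.1 p.2))) (ZK.μL L) := I1.sub I2
    have P3 : Integrable (fun p : ℝ × ℝ => 2 * (f τ p.1 p.2 * u τ p.1 p.2)
        - 2 * (u τ p.1 p.2 * (b * Dx u τ p.1 p.2))
        - 2 * (u τ p.1 p.2 * Dx (Dx (Dx u)) τ p.1 p.2)) (ZK.μL L) := P2.sub I3
    have P4 : Integrable (fun p : ℝ × ℝ => 2 * (f τ p.1 p.2 * u τ p.1 p.2)
        - 2 * (u τ p.1 p.2 * (b * Dx u τ p.1 p.2))
        - 2 * (u τ p.1 p.2 * Dx (Dx (Dx u)) τ p.1 p.2)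
        - 2 * (u τ p.1 p.2 * Dx (Dy (Dy u)) τ p.1 p.2)) (ZK.μL L) := P3.sub I4
    have P5 : Integrable (fun p : ℝ × ℝ => 2 * (f τ p.1 p.2 * u τ p.1 p.2)
        - 2 * (u τ p.1 p.2 * (b * Dx u τ p.1 p.2))
        - 2 * (u τ p.1 p.2 * Dx (Dx (Dx u)) τ p.1 p.2)
        - 2 * (u τ p.1 p.2 * Dx (Dy (Dy u)) τ p.1 p.2)
        - h * (2 * (u τ p.1 p.2 * Dx (Dx (Dx (Dx u))) τ p.1 p.2))) (ZK.μL L) := P4.sub I5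
    have P6 : Integrable (fun p : ℝ × ℝ => 2 * (f τ p.1 p.2 * u τ p.1 p.2)
        - 2 * (u τ p.1 p.2 * (b * Dx u τ p.1 p.2))
        - 2 * (u τ p.1 p.2 * Dx (Dx (Dx u)) τ p.1 p.2)
        - 2 * (u τ p.1 p.2 * Dx (Dy (Dy u)) τ p.1 p.2)
        - h * (2 * (u τ p.1 p.2 * Dx (Dx (Dx (Dx u))) τ p.1 p.2))
        - h * (2 * (u τ p.1 p.2 * Dy (Dy (Dy (Dy u))) τ p.1 p.2))) (ZK.μL L) := P5.sub I6
    have P7 : Integrable (fun p : ℝ × ℝ => 2 * (f τ p.1 p.2 * u τ p.1 p.2)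
        - 2 * (u τ p.1 p.2 * (b * Dx u τ p.1 p.2))
        - 2 * (u τ p.1 p.2 * Dx (Dx (Dx u)) τ p.1 p.2)
        - 2 * (u τ p.1 p.2 * Dx (Dy (Dy u)) τ p.1 p.2)
        - h * (2 * (u τ p.1 p.2 * Dx (Dx (Dx (Dx u))) τ p.1 p.2))
        - h * (2 * (u τ p.1 p.2 * Dy (Dy (Dy (Dy u))) τ p.1 p.2))
        - 2 * (u τ p.1 p.2 * (deriv g (u τ p.1 p.2) * Dx u τ p.1 p.2))) (ZK.μL L) := P6.sub I7
    have P8 : Integrable (fun p : ℝ × ℝ => 2 * (f τ p.1 p.2 * u τ p.1 p.2)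
        - 2 * (u τ p.1 p.2 * (b * Dx u τ p.1 p.2))
        - 2 * (u τ p.1 p.2 * Dx (Dx (Dx u)) τ p.1 p.2)
        - 2 * (u τ p.1 p.2 * Dx (Dy (Dy u)) τ p.1 p.2)
        - h * (2 * (u τ p.1 p.2 * Dx (Dx (Dx (Dx u))) τ p.1 p.2))
        - h * (2 * (u τ p.1 p.2 * Dy (Dy (Dy (Dy u))) τ p.1 p.2))
        - 2 * (u τ p.1 p.2 * (deriv g (u τ p.1 p.2) * Dx u τ p.1 p.2))
        + 2 * (u τ p.1 p.2 * Dx A1 τ p.1 p.2)) (ZK.μL L) := P7.add I8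
    have P9 : Integrable (fun p : ℝ × ℝ => 2 * (f τ p.1 p.2 * u τ p.1 p.2)
        - 2 * (u τ p.1 p.2 * (b * Dx u τ p.1 p.2))
        - 2 * (u τ p.1 p.2 * Dx (Dx (Dx u)) τ p.1 p.2)
        - 2 * (u τ p.1 p.2 * Dx (Dy (Dy u)) τ p.1 p.2)
        - h * (2 * (u τ p.1 p.2 * Dx (Dx (Dx (Dx u))) τ p.1 p.2))
        - h * (2 * (u τ p.1 p.2 * Dy (Dy (Dy (Dy u))) τ p.1 p.2))
        - 2 * (u τ p.1 p.2 * (deriv g (u τ p.1 p.2) * Dx u τ p.1 p.2))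
        + 2 * (u τ p.1 p.2 * Dx A1 τ p.1 p.2)
        + 2 * (u τ p.1 p.2 * Dy A2 τ p.1 p.2)) (ZK.μL L) := P8.add I9
    -- now split the integral of the pointwise identity
    have hs0 : (∫ p : ℝ × ℝ, 2 * u τ p.1 p.2 * Dt u τ p.1 p.2 ∂(ZK.μL L))
        = ∫ p : ℝ × ℝ, (2 * (f τ p.1 p.2 * u τ p.1 p.2)
          - 2 * (u τ p.1 p.2 * (b * Dx u τ p.1 p.2))
          - 2 * (u τ p.1 p.2 * Dx (Dx (Dx u)) τ p.1 p.2)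
          - 2 * (u τ p.1 p.2 * Dx (Dy (Dy u)) τ p.1 p.2)
          - h * (2 * (u τ p.1 p.2 * Dx (Dx (Dx (Dx u))) τ p.1 p.2))
          - h * (2 * (u τ p.1 p.2 * Dy (Dy (Dy (Dy u))) τ p.1 p.2))
          - 2 * (u τ p.1 p.2 * (deriv g (u τ p.1 p.2) * Dx u τ p.1 p.2))
          + 2 * (u τ p.1 p.2 * Dx A1 τ p.1 p.2)
          + 2 * (u τ p.1 p.2 * Dy A2 τ p.1 p.2)
          - 2 * (a₀ p.1 p.2 * u τ p.1 p.2 ^ 2)) ∂(ZK.μL L) :=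
      MeasureTheory.integral_congr_ae hae
    have hsplit : (∫ p : ℝ × ℝ, (2 * (f τ p.1 p.2 * u τ p.1 p.2)
          - 2 * (u τ p.1 p.2 * (b * Dx u τ p.1 p.2))
          - 2 * (u τ p.1 p.2 * Dx (Dx (Dx u)) τ p.1 p.2)
          - 2 * (u τ p.1 p.2 * Dx (Dy (Dy u)) τ p.1 p.2)
          - h * (2 * (u τ p.1 p.2 * Dx (Dx (Dx (Dx u))) τ p.1 p.2))
          - h * (2 * (u τ p.1 p.2 * Dy (Dy (Dy (Dy u))) τ p.1 p.2))
          - 2 * (u τ p.1 p.2 * (deriv g (u τ p.1 p.2) * Dx u τ p.1 p.2))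
          + 2 * (u τ p.1 p.2 * Dx A1 τ p.1 p.2)
          + 2 * (u τ p.1 p.2 * Dy A2 τ p.1 p.2)
          - 2 * (a₀ p.1 p.2 * u τ p.1 p.2 ^ 2)) ∂(ZK.μL L))
        = (∫ p : ℝ × ℝ, 2 * (f τ p.1 p.2 * u τ p.1 p.2) ∂(ZK.μL L))
          - (∫ p : ℝ × ℝ, 2 * (u τ p.1 p.2 * (b * Dx u τ p.1 p.2)) ∂(ZK.μL L))
          - (∫ p : ℝ × ℝ, 2 * (u τ p.1 p.2 * Dx (Dx (Dx u)) τ p.1 p.2) ∂(ZK.μL L))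
          - (∫ p : ℝ × ℝ, 2 * (u τ p.1 p.2 * Dx (Dy (Dy u)) τ p.1 p.2) ∂(ZK.μL L))
          - (∫ p : ℝ × ℝ, h * (2 * (u τ p.1 p.2 * Dx (Dx (Dx (Dx u))) τ p.1 p.2)) ∂(ZK.μL L))
          - (∫ p : ℝ × ℝ, h * (2 * (u τ p.1 p.2 * Dy (Dy (Dy (Dy u))) τ p.1 p.2)) ∂(ZK.μL L))
          - (∫ p : ℝ × ℝ, 2 * (u τ p.1 p.2 * (deriv g (u τ p.1 p.2) * Dx u τ p.1 p.2)) ∂(ZK.μL L))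
          + (∫ p : ℝ × ℝ, 2 * (u τ p.1 p.2 * Dx A1 τ p.1 p.2) ∂(ZK.μL L))
          + (∫ p : ℝ × ℝ, 2 * (u τ p.1 p.2 * Dy A2 τ p.1 p.2) ∂(ZK.μL L))
          - ∫ p : ℝ × ℝ, 2 * (a₀ p.1 p.2 * u τ p.1 p.2 ^ 2) ∂(ZK.μL L) := by
      rw [MeasureTheory.integral_sub P9 I10,
        MeasureTheory.integral_add P8 I9,
        MeasureTheory.integral_add P7 I8,
        MeasureTheory.integral_sub P6 I7,
        MeasureTheory.integral_sub P5 I6,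
        MeasureTheory.integral_sub P4 I5,
        MeasureTheory.integral_sub P3 I4,
        MeasureTheory.integral_sub P2 I3,
        MeasureTheory.integral_sub I1 I2]
    have hJ5 : (∫ p : ℝ × ℝ,
        h * (2 * (u τ p.1 p.2 * Dx (Dx (Dx (Dx u))) τ p.1 p.2)) ∂(ZK.μL L))
        = h * (2 * ∫ p : ℝ × ℝ, (Dx (Dx u) τ p.1 p.2) ^ 2 ∂(ZK.μL L)) := by
      have hX5 : (∫ p : ℝ × ℝ, 2 * (u τ p.1 p.2 * Dx (Dx (Dx (Dx u))) τ p.1 p.2) ∂(ZK.μL L))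
          = 2 * ∫ p : ℝ × ℝ, (Dx (Dx u) τ p.1 p.2) ^ 2 ∂(ZK.μL L) := by
        linarith [st5, h5sub, c5]
      rw [V5, hX5]
    have hJ6 : (∫ p : ℝ × ℝ,
        h * (2 * (u τ p.1 p.2 * Dy (Dy (Dy (Dy u))) τ p.1 p.2)) ∂(ZK.μL L))
        = h * (2 * ∫ p : ℝ × ℝ, (Dy (Dy u) τ p.1 p.2) ^ 2 ∂(ZK.μL L)) := by
      have hX6 : (∫ p : ℝ × ℝ, 2 * (u τ p.1 p.2 * Dy (Dy (Dy (Dy u))) τ p.1 p.2) ∂(ZK.μL L))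
          = 2 * ∫ p : ℝ × ℝ, (Dy (Dy u) τ p.1 p.2) ^ 2 ∂(ZK.μL L) := by
        linarith [st6, h6sub, c6]
      rw [V6, hX6]
    have hJ8 : (∫ p : ℝ × ℝ, 2 * (u τ p.1 p.2 * Dx A1 τ p.1 p.2) ∂(ZK.μL L))
        = -(2 * ∫ p : ℝ × ℝ, a₁ p.1 p.2 * (Dx u τ p.1 p.2) ^ 2 ∂(ZK.μL L)) := by
      linarith [st8, h8add, c8]
    have hJ9 : (∫ p : ℝ × ℝ, 2 * (u τ p.1 p.2 * Dy A2 τ p.1 p.2) ∂(ZK.μL L))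
        = -(2 * ∫ p : ℝ × ℝ, a₂ p.1 p.2 * (Dy u τ p.1 p.2) ^ 2 ∂(ZK.μL L)) := by
      linarith [st9, h9add, c9]
    rw [hs0, hsplit, V1, V2, V3, V4, hJ5, hJ6, V7, hJ8, hJ9, V10, HIA, HIB]
    ring
  -- Fundamental theorem of calculus and assembly
  intro t ht
  have huIcc : uIcc (0:ℝ) t = Icc 0 t := uIcc_of_le ht.1
  have h0t : Icc (0:ℝ) t ⊆ Icc (0:ℝ) T := fun s hs => ⟨hs.1, le_trans hs.2 ht.2⟩
  have cf' : Continuous (fun τ =>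
      2 * (∫ p : ℝ × ℝ, f τ p.1 p.2 * u τ p.1 p.2 ∂(ZK.μL L))
        - 2 * h * (∫ p : ℝ × ℝ,
            ((Dx (Dx u) τ p.1 p.2) ^ 2 + (Dy (Dy u) τ p.1 p.2) ^ 2) ∂(ZK.μL L))
        - 2 * (∫ p : ℝ × ℝ,
            (a₁ p.1 p.2 * (Dx u τ p.1 p.2) ^ 2 + a₂ p.1 p.2 * (Dy u τ p.1 p.2) ^ 2
              + a₀ p.1 p.2 * (u τ p.1 p.2) ^ 2) ∂(ZK.μL L))) :=
    ((continuous_const.mul cIC).sub (continuous_const.mul cIA)).sub (continuous_const.mul cIB)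
  have hFTC : (∫ τ in (0:ℝ)..t,
      (2 * (∫ p : ℝ × ℝ, f τ p.1 p.2 * u τ p.1 p.2 ∂(ZK.μL L))
        - 2 * h * (∫ p : ℝ × ℝ,
            ((Dx (Dx u) τ p.1 p.2) ^ 2 + (Dy (Dy u) τ p.1 p.2) ^ 2) ∂(ZK.μL L))
        - 2 * (∫ p : ℝ × ℝ,
            (a₁ p.1 p.2 * (Dx u τ p.1 p.2) ^ 2 + a₂ p.1 p.2 * (Dy u τ p.1 p.2) ^ 2
              + a₀ p.1 p.2 * (u τ p.1 p.2) ^ 2) ∂(ZK.μL L))))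
      = (∫ p : ℝ × ℝ, (u t p.1 p.2) ^ 2 ∂(ZK.μL L))
        - (∫ p : ℝ × ℝ, (u 0 p.1 p.2) ^ 2 ∂(ZK.μL L)) := by
    refine intervalIntegral.integral_eq_sub_of_hasDerivAt
      (f := fun s => ∫ p : ℝ × ℝ, (u s p.1 p.2) ^ 2 ∂(ZK.μL L)) ?_ (cf'.intervalIntegrable 0 t)
    intro τ hτ
    exact (hΦd τ).congr_d (key τ (h0t (huIcc ▸ hτ)))
  have ii1 : IntervalIntegrable (fun τ =>
      2 * (∫ p : ℝ × ℝ, f τ p.1 p.2 * u τ p.1 p.2 ∂(ZK.μL L))) volume 0 t :=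
    (continuous_const.mul cIC).intervalIntegrable 0 t
  have ii2 : IntervalIntegrable (fun τ => 2 * h * (∫ p : ℝ × ℝ,
      ((Dx (Dx u) τ p.1 p.2) ^ 2 + (Dy (Dy u) τ p.1 p.2) ^ 2) ∂(ZK.μL L))) volume 0 t :=
    (continuous_const.mul cIA).intervalIntegrable 0 t
  have ii3 : IntervalIntegrable (fun τ => 2 * (∫ p : ℝ × ℝ,
      (a₁ p.1 p.2 * (Dx u τ p.1 p.2) ^ 2 + a₂ p.1 p.2 * (Dy u τ p.1 p.2) ^ 2
        + a₀ p.1 p.2 * (u τ p.1 p.2) ^ 2) ∂(ZK.μL L))) volume 0 t :=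
    (continuous_const.mul cIB).intervalIntegrable 0 t
  have hsplit2 : (∫ τ in (0:ℝ)..t,
      (2 * (∫ p : ℝ × ℝ, f τ p.1 p.2 * u τ p.1 p.2 ∂(ZK.μL L))
        - 2 * h * (∫ p : ℝ × ℝ,
            ((Dx (Dx u) τ p.1 p.2) ^ 2 + (Dy (Dy u) τ p.1 p.2) ^ 2) ∂(ZK.μL L))
        - 2 * (∫ p : ℝ × ℝ,
            (a₁ p.1 p.2 * (Dx u τ p.1 p.2) ^ 2 + a₂ p.1 p.2 * (Dy u τ p.1 p.2) ^ 2
              + a₀ p.1 p.2 * (u τ p.1 p.2) ^ 2) ∂(ZK.μL L))))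
      = (∫ τ in (0:ℝ)..t, 2 * (∫ p : ℝ × ℝ, f τ p.1 p.2 * u τ p.1 p.2 ∂(ZK.μL L)))
        - (∫ τ in (0:ℝ)..t, 2 * h * (∫ p : ℝ × ℝ,
            ((Dx (Dx u) τ p.1 p.2) ^ 2 + (Dy (Dy u) τ p.1 p.2) ^ 2) ∂(ZK.μL L)))
        - (∫ τ in (0:ℝ)..t, 2 * (∫ p : ℝ × ℝ,
            (a₁ p.1 p.2 * (Dx u τ p.1 p.2) ^ 2 + a₂ p.1 p.2 * (Dy u τ p.1 p.2) ^ 2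
              + a₀ p.1 p.2 * (u τ p.1 p.2) ^ 2) ∂(ZK.μL L))) := by
    rw [intervalIntegral.integral_sub (ii1.sub ii2) ii3, intervalIntegral.integral_sub ii1 ii2]
  have hc1 : (∫ τ in (0:ℝ)..t, 2 * (∫ p : ℝ × ℝ, f τ p.1 p.2 * u τ p.1 p.2 ∂(ZK.μL L)))
      = 2 * ∫ τ in (0:ℝ)..t, (∫ p : ℝ × ℝ, f τ p.1 p.2 * u τ p.1 p.2 ∂(ZK.μL L)) :=
    intervalIntegral.integral_const_mul 2 _
  have hc2 : (∫ τ in (0:ℝ)..t, 2 * h * (∫ p : ℝ × ℝ,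
      ((Dx (Dx u) τ p.1 p.2) ^ 2 + (Dy (Dy u) τ p.1 p.2) ^ 2) ∂(ZK.μL L)))
      = 2 * h * ∫ τ in (0:ℝ)..t, (∫ p : ℝ × ℝ,
        ((Dx (Dx u) τ p.1 p.2) ^ 2 + (Dy (Dy u) τ p.1 p.2) ^ 2) ∂(ZK.μL L)) :=
    intervalIntegral.integral_const_mul (2*h) _
  have hc3 : (∫ τ in (0:ℝ)..t, 2 * (∫ p : ℝ × ℝ,
      (a₁ p.1 p.2 * (Dx u τ p.1 p.2) ^ 2 + a₂ p.1 p.2 * (Dy u τ p.1 p.2) ^ 2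
        + a₀ p.1 p.2 * (u τ p.1 p.2) ^ 2) ∂(ZK.μL L)))
      = 2 * ∫ τ in (0:ℝ)..t, (∫ p : ℝ × ℝ,
        (a₁ p.1 p.2 * (Dx u τ p.1 p.2) ^ 2 + a₂ p.1 p.2 * (Dy u τ p.1 p.2) ^ 2
          + a₀ p.1 p.2 * (u τ p.1 p.2) ^ 2) ∂(ZK.μL L)) :=
    intervalIntegral.integral_const_mul 2 _
  -- bridges between iterated integrals in the statement and the product-measure integrals
  have hB1 : (∫ x : ℝ, ∫ y in Ioo (0:ℝ) L, (u t x y) ^ 2)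
      = ∫ p : ℝ × ℝ, (u t p.1 p.2) ^ 2 ∂(ZK.μL L) :=
    (ZK.integral_eq_iterated (F := fun p : ℝ × ℝ => (u t p.1 p.2) ^ 2) hRnn
      (hub.continuous.pow 2 |>.comp (Continuous.prodMk_right t))
      (fun p hx => by simp [s_u t p.1 p.2 hx])).symm
  have hB0 : (∫ x : ℝ, ∫ y in Ioo (0:ℝ) L, (u 0 x y) ^ 2)
      = ∫ p : ℝ × ℝ, (u 0 p.1 p.2) ^ 2 ∂(ZK.μL L) :=
    (ZK.integral_eq_iterated (F := fun p : ℝ × ℝ => (u 0 p.1 p.2) ^ 2) hRnn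
      (hub.continuous.pow 2 |>.comp (Continuous.prodMk_right 0))
      (fun p hx => by simp [s_u 0 p.1 p.2 hx])).symm
  have hBA : (∫ τ in (0:ℝ)..t, ∫ x : ℝ, ∫ y in Ioo (0:ℝ) L,
        ((Dx (Dx u) τ x y) ^ 2 + (Dy (Dy u) τ x y) ^ 2))
      = ∫ τ in (0:ℝ)..t, (∫ p : ℝ × ℝ,
        ((Dx (Dx u) τ p.1 p.2) ^ 2 + (Dy (Dy u) τ p.1 p.2) ^ 2) ∂(ZK.μL L)) := by
    refine intervalIntegral.integral_congr (fun τ _ => ?_)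
    exact (ZK.integral_eq_iterated
      (F := fun p : ℝ × ℝ => (Dx (Dx u) τ p.1 p.2) ^ 2 + (Dy (Dy u) τ p.1 p.2) ^ 2) hRnn
      (((huxx.continuous.comp (Continuous.prodMk_right τ)).pow 2).add
        ((huyy.continuous.comp (Continuous.prodMk_right τ)).pow 2))
      (fun p hx => by simp [s_uxx τ p.1 p.2 hx, s_uyy τ p.1 p.2 hx])).symm
  have hBB : (∫ τ in (0:ℝ)..t, ∫ x : ℝ, ∫ y in Ioo (0:ℝ) L,
        (a₁ x y * (Dx u τ x y) ^ 2 + a₂ x y * (Dy u τ x y) ^ 2 + a₀ x y * (u τ x y) ^ 2))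
      = ∫ τ in (0:ℝ)..t, (∫ p : ℝ × ℝ,
        (a₁ p.1 p.2 * (Dx u τ p.1 p.2) ^ 2 + a₂ p.1 p.2 * (Dy u τ p.1 p.2) ^ 2
          + a₀ p.1 p.2 * (u τ p.1 p.2) ^ 2) ∂(ZK.μL L)) := by
    refine intervalIntegral.integral_congr (fun τ _ => ?_)
    exact (ZK.integral_eq_iterated
      (F := fun p : ℝ × ℝ => a₁ p.1 p.2 * (Dx u τ p.1 p.2) ^ 2
        + a₂ p.1 p.2 * (Dy u τ p.1 p.2) ^ 2 + a₀ p.1 p.2 * (u τ p.1 p.2) ^ 2) hRnn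
      (((ha₁.continuous.mul ((hux.continuous.comp (Continuous.prodMk_right τ)).pow 2)).add
        (ha₂.continuous.mul ((huy.continuous.comp (Continuous.prodMk_right τ)).pow 2))).add
        (ha₀.mul ((hub.continuous.comp (Continuous.prodMk_right τ)).pow 2)))
      (fun p hx => by simp [s_ux τ p.1 p.2 hx, s_uy τ p.1 p.2 hx, s_u τ p.1 p.2 hx])).symm
  have hBC : (∫ τ in (0:ℝ)..t, ∫ x : ℝ, ∫ y in Ioo (0:ℝ) L, f τ x y * u τ x y)
      = ∫ τ in (0:ℝ)..t, (∫ p : ℝ × ℝ, f τ p.1 p.2 * u τ p.1 p.2 ∂(ZK.μL L)) := by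
    refine intervalIntegral.integral_congr (fun τ _ => ?_)
    exact (ZK.integral_eq_iterated
      (F := fun p : ℝ × ℝ => f τ p.1 p.2 * u τ p.1 p.2) hRnn
      (((hf.comp (Continuous.prodMk_right τ))).mul (hub.continuous.comp (Continuous.prodMk_right τ)))
      (fun p hx => by simp [s_u τ p.1 p.2 hx])).symm
  rw [hB1, hB0, hBA, hBB, hBC]
  rw [hsplit2, hc1, hc2, hc3] at hFTC
  linarith [hFTC]
end
end

section
/- Let ψ be an admissible weight function. Then there exists a constant c > 0, depending only on the constants in the admissibility bounds for ψ (in particular independent of L and of φ), such that for every L > 0 and every test function φ on the strip Σ: ∬_Σ φ⁴ ψ(x)² dx dy ≤ c ( ∬_Σ ( |Dφ|² + φ² ) ψ(x) dx dy )². -/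
open MeasureTheory Real Set

noncomputable section

/-- Partial derivative in `x`. -/
def px (φ : ℝ → ℝ → ℝ) (x y : ℝ) : ℝ := deriv (fun t => φ t y) x

/-- Partial derivative in `y`. -/
def py (φ : ℝ → ℝ → ℝ) (x y : ℝ) : ℝ := deriv (fun t => φ x t) y

/-- A test function on the strip `ℝ × (0, L)`. -/
structure IsTestFun (L : ℝ) (φ : ℝ → ℝ → ℝ) : Prop where
  smooth : ContDiff ℝ (⊤ : ℕ∞) (fun p : ℝ × ℝ => φ p.1 p.2)
  supp : ∃ R > 0, ∀ x y : ℝ, R ≤ |x| → φ x y = 0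
  bc0 : ∀ x : ℝ, φ x 0 = 0
  bcL : ∀ x : ℝ, φ x L = 0

/-- An admissible weight function. -/
structure Admissible (ψ : ℝ → ℝ) : Prop where
  smooth : ContDiff ℝ (⊤ : ℕ∞) ψ
  pos : ∀ x : ℝ, 0 < ψ x
  bound : ∀ j : ℕ, 1 ≤ j → ∃ c : ℝ, ∀ x : ℝ, |iteratedDeriv j ψ x| ≤ c * ψ x

/-- Weighted `L⁴` interpolation inequality on the strip, with constant uniform in
the width `L`. -/
theorem weighted_L4_interpolation (ψ : ℝ → ℝ) (hψ : Admissible ψ) :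
    ∃ c > 0, ∀ L : ℝ, 0 < L → ∀ φ : ℝ → ℝ → ℝ, IsTestFun L φ →
      (∫ x : ℝ, ∫ y in Ioo (0:ℝ) L, (φ x y) ^ 4 * ψ x ^ 2)
        ≤ c * (∫ x : ℝ, ∫ y in Ioo (0:ℝ) L,
            ((px φ x y) ^ 2 + (py φ x y) ^ 2 + (φ x y) ^ 2) * ψ x) ^ 2 := by
  obtain ⟨c₁, hc₁⟩ := hψ.bound 1 le_rfl
  set c₀ : ℝ := max c₁ 0 with hc₀def
  have hc₀ : 0 ≤ c₀ := le_max_right _ _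
  have hψ' : ∀ x, |deriv ψ x| ≤ c₀ * ψ x := by
    intro x
    have h := hc₁ x
    rw [iteratedDeriv_one] at h
    exact h.trans (mul_le_mul_of_nonneg_right (le_max_left _ _) (hψ.pos x).le)
  have hψd : ∀ x, HasDerivAt ψ (deriv ψ x) x :=
    fun x => ((hψ.smooth.differentiable (by simp)) x).hasDerivAt
  have hψc : Continuous ψ := hψ.smooth.continuous
  have hψdc : Continuous (deriv ψ) := hψ.smooth.continuous_deriv (by exact_mod_cast le_top)
  refine ⟨1 + c₀, by linarith, ?_⟩
  intro L hL φ hφ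
  obtain ⟨R, hR, hsupp⟩ := hφ.supp
  set μ := volume.restrict (Ioo (0:ℝ) L) with hμdef
  set Φ : ℝ × ℝ → ℝ := fun p => φ p.1 p.2 with hΦdef
  have hΦ : ContDiff ℝ (⊤:ℕ∞) Φ := hφ.smooth
  have hΦc : Continuous Φ := hΦ.continuous
  have hφc : ∀ y, Continuous (fun t => φ t y) := fun y =>
    hΦc.comp (continuous_id.prodMk continuous_const)
  -- partial derivatives
  have hpxf : ∀ x y : ℝ, HasDerivAt (fun t => φ t y) (fderiv ℝ Φ (x, y) (1, 0)) x := by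
    intro x y
    have h1 : HasDerivAt (fun t : ℝ => ((t, y) : ℝ × ℝ)) ((1:ℝ), (0:ℝ)) x :=
      (hasDerivAt_id x).prodMk (hasDerivAt_const x y)
    exact ((hΦ.differentiable (by simp)) (x, y)).hasFDerivAt.comp_hasDerivAt x h1
  have hpx_eq : ∀ x y, px φ x y = fderiv ℝ Φ (x, y) (1, 0) :=
    fun x y => (hpxf x y).deriv
  have hpx : ∀ x y, HasDerivAt (fun t => φ t y) (px φ x y) x := by
    intro x y; rw [hpx_eq]; exact hpxf x y
  have hpyf : ∀ x y : ℝ, HasDerivAt (fun s => φ x s) (fderiv ℝ Φ (x, y) (0, 1)) y := by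
    intro x y
    have h1 : HasDerivAt (fun s : ℝ => ((x, s) : ℝ × ℝ)) ((0:ℝ), (1:ℝ)) y :=
      (hasDerivAt_const y x).prodMk (hasDerivAt_id y)
    exact ((hΦ.differentiable (by simp)) (x, y)).hasFDerivAt.comp_hasDerivAt y h1
  have hpy_eq : ∀ x y, py φ x y = fderiv ℝ Φ (x, y) (0, 1) :=
    fun x y => (hpyf x y).deriv
  have hpy : ∀ x y, HasDerivAt (fun s => φ x s) (py φ x y) y := by
    intro x y; rw [hpy_eq]; exact hpyf x y
  have hfdc : Continuous (fderiv ℝ Φ) := (hΦ.fderiv_right (m := (⊤:ℕ∞)) (by exact_mod_cast le_top)).continuous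
  have hpxc : Continuous (fun p : ℝ × ℝ => px φ p.1 p.2) := by
    have he : (fun p : ℝ × ℝ => px φ p.1 p.2) = fun p => fderiv ℝ Φ p ((1:ℝ), (0:ℝ)) :=
      funext fun p => hpx_eq p.1 p.2
    rw [he]; exact hfdc.clm_apply continuous_const
  have hpyc : Continuous (fun p : ℝ × ℝ => py φ p.1 p.2) := by
    have he : (fun p : ℝ × ℝ => py φ p.1 p.2) = fun p => fderiv ℝ Φ p ((0:ℝ), (1:ℝ)) :=
      funext fun p => hpy_eq p.1 p.2
    rw [he]; exact hfdc.clm_apply continuous_const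
  -- the weight integrand K
  set K : ℝ → ℝ → ℝ :=
    fun x y => ((px φ x y) ^ 2 + (py φ x y) ^ 2 + (φ x y) ^ 2) * ψ x with hKdef
  have hKnn : ∀ x y, 0 ≤ K x y := by
    intro x y
    have := (hψ.pos x).le
    have h1 : 0 ≤ (px φ x y) ^ 2 + (py φ x y) ^ 2 + (φ x y) ^ 2 := by positivity
    exact mul_nonneg h1 this
  have hKc : Continuous (fun p : ℝ × ℝ => K p.1 p.2) := by
    exact (((hpxc.pow 2).add (hpyc.pow 2)).add (hΦc.pow 2)).mul (hψc.comp continuous_fst)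
  -- support properties
  have hpy0 : ∀ x y, R ≤ |x| → py φ x y = 0 := by
    intro x y hx
    have he : (fun s => φ x s) = fun _ => (0:ℝ) := funext fun s => hsupp x s hx
    rw [py, he, deriv_const]
  have hpx0 : ∀ x y, R < |x| → px φ x y = 0 := by
    intro x y hx
    have ho : IsOpen {t : ℝ | R < |t|} := isOpen_lt continuous_const continuous_abs
    have hev : (fun t => φ t y) =ᶠ[nhds x] (fun _ => (0:ℝ)) := by
      filter_upwards [ho.mem_nhds hx] with t ht
      exact hsupp t y ht.le
    rw [px, hev.deriv_eq, deriv_const]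
  have hK0 : ∀ x y, R < |x| → K x y = 0 := by
    intro x y hx
    rw [hKdef]
    simp only
    rw [hpx0 x y hx, hpy0 x y hx.le, hsupp x y hx.le]
    ring
  have habs_of_nmem : ∀ x : ℝ, x ∉ Icc (-R) R → R < |x| := by
    intro x hx
    rw [mem_Icc, not_and_or, not_le, not_le] at hx
    rcases hx with h | h
    · exact lt_abs.2 (Or.inr (by linarith))
    · exact lt_abs.2 (Or.inl h)
  -- integrability of K in x for fixed y
  have hKyc : ∀ y, Continuous (fun t => K t y) :=
    fun y => hKc.comp (continuous_id.prodMk continuous_const)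
  have hKint_y : ∀ y, Integrable (fun t => K t y) volume := by
    intro y
    apply (hKyc y).integrable_of_hasCompactSupport
    exact HasCompactSupport.intro isCompact_Icc (fun x hx => hK0 x y (habs_of_nmem x hx))
  -- integrability of K in y for fixed x
  have hKxc : ∀ x, Continuous (fun s => K x s) :=
    fun x => hKc.comp (continuous_const.prodMk continuous_id)
  have hKint_x : ∀ x, IntegrableOn (fun s => K x s) (Ioo 0 L) volume := by
    intro x
    exact ((hKxc x).integrableOn_Icc (a := 0) (b := L)).mono_set Ioo_subset_Icc_self
  -- integrability on the product
  have hae2 : ∀ᵐ p : ℝ × ℝ ∂(volume.prod μ), p.2 ∈ Ioo (0:ℝ) L := by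
    rw [ae_iff]
    have hset : {p : ℝ × ℝ | ¬ p.2 ∈ Ioo (0:ℝ) L} = (univ : Set ℝ) ×ˢ (Ioo (0:ℝ) L)ᶜ := by
      ext p; simp
    rw [hset, Measure.prod_prod]
    have : μ ((Ioo (0:ℝ) L)ᶜ) = 0 := by
      rw [hμdef, Measure.restrict_apply measurableSet_Ioo.compl, compl_inter_self]
      exact measure_empty
    rw [this, mul_zero]
  obtain ⟨M, hM⟩ := (isCompact_Icc.prod isCompact_Icc).exists_bound_of_continuousOn
    (s := Icc (-R) R ×ˢ Icc (0:ℝ) L) hKc.continuousOn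
  have hK'int : Integrable (fun p : ℝ × ℝ => K p.1 p.2) (volume.prod μ) := by
    refine Integrable.mono'
      (g := (Icc (-R) R ×ˢ Icc (0:ℝ) L).indicator (fun _ => max M 0)) ?_
      hKc.aestronglyMeasurable ?_
    · rw [integrable_indicator_iff (measurableSet_Icc.prod measurableSet_Icc)]
      refine (integrableOn_const_iff (C := max M 0)).2 (Or.inr ?_)
      rw [Measure.prod_prod]
      refine ENNReal.mul_lt_top ?_ ?_
      · rw [Real.volume_Icc]; exact ENNReal.ofReal_lt_top
      · calc μ (Icc (0:ℝ) L) ≤ μ univ := measure_mono (subset_univ _)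
          _ < ⊤ := by
            rw [hμdef, Measure.restrict_apply_univ, Real.volume_Ioo]
            exact ENNReal.ofReal_lt_top
    · filter_upwards [hae2] with p hp
      by_cases h1 : p.1 ∈ Icc (-R) R
      · have hpS : p ∈ Icc (-R) R ×ˢ Icc (0:ℝ) L := ⟨h1, Ioo_subset_Icc_self hp⟩
        rw [indicator_of_mem hpS]
        exact (hM p hpS).trans (le_max_left _ _)
      · rw [Real.norm_eq_abs, hK0 _ _ (habs_of_nmem _ h1), abs_zero]
        exact indicator_nonneg (fun _ _ => le_max_right _ _) _
  -- marginals
  set F : ℝ → ℝ := fun y => ∫ t, K t y with hFdef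
  set G : ℝ → ℝ := fun x => ∫ s, K x s ∂μ with hGdef
  have hGint : Integrable G volume := hK'int.integral_prod_left
  have hFint : Integrable F μ := hK'int.integral_prod_right
  have hswap : ∫ x, G x = ∫ y, F y ∂μ := integral_integral_swap hK'int
  have hFnn : ∀ y, 0 ≤ F y := fun y => integral_nonneg (fun t => hKnn t y)
  have hGnn : ∀ x, 0 ≤ G x := fun x => integral_nonneg (fun s => hKnn x s)
  -- Lemma A : φ² ψ ≤ (1+c₀) F y
  have hA : ∀ x y : ℝ, (φ x y) ^ 2 * ψ x ≤ (1 + c₀) * F y := by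
    intro x y
    by_cases hx : R ≤ |x|
    · rw [hsupp x y hx]
      have : (0:ℝ) ^ 2 * ψ x = 0 := by ring
      rw [this]
      exact mul_nonneg (by linarith) (hFnn y)
    · push_neg at hx
      have hax : -R < x := by
        rcases abs_lt.1 hx with ⟨h1, _⟩; linarith
      have hder : ∀ t, HasDerivAt (fun t => (φ t y) ^ 2 * ψ t)
          (((2:ℕ) * (φ t y) ^ (2-1) * px φ t y) * ψ t + (φ t y) ^ 2 * deriv ψ t) t :=
        fun t => ((hpx t y).pow 2).mul (hψd t)
      have hcont' : Continuous (fun t =>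
          (((2:ℕ):ℝ) * (φ t y) ^ (2-1) * px φ t y) * ψ t + (φ t y) ^ 2 * deriv ψ t) := by
        apply Continuous.add
        · exact ((continuous_const.mul ((hφc y).pow _)).mul
            (hpxc.comp (continuous_id.prodMk continuous_const))).mul hψc
        · exact ((hφc y).pow 2).mul hψdc
      have hia : φ (-R) y = 0 := hsupp (-R) y (by rw [abs_neg, abs_of_pos hR])
      have hftc : (∫ t in (-R)..x,
          ((((2:ℕ):ℝ) * (φ t y) ^ (2-1) * px φ t y) * ψ t + (φ t y) ^ 2 * deriv ψ t))
          = (φ x y) ^ 2 * ψ x - (φ (-R) y) ^ 2 * ψ (-R) :=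
        intervalIntegral.integral_eq_sub_of_hasDerivAt
          (fun t _ => hder t) (hcont'.intervalIntegrable _ _)
      have hpt : ∀ t, (((2:ℕ):ℝ) * (φ t y) ^ (2-1) * px φ t y) * ψ t + (φ t y) ^ 2 * deriv ψ t
          ≤ (1 + c₀) * K t y := by
        intro t
        have h1 := (abs_le.1 (hψ' t)).2
        have h2 := hψ.pos t
        rw [hKdef]
        simp only
        push_cast
        nlinarith [mul_nonneg (sq_nonneg (φ t y - px φ t y)) h2.le,
          mul_nonneg (sq_nonneg (py φ t y)) h2.le,
          mul_le_mul_of_nonneg_left h1 (sq_nonneg (φ t y)),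
          mul_nonneg (mul_nonneg hc₀ (sq_nonneg (px φ t y))) h2.le,
          mul_nonneg (mul_nonneg hc₀ (sq_nonneg (py φ t y))) h2.le]
      calc (φ x y) ^ 2 * ψ x
          = ∫ t in (-R)..x,
            ((((2:ℕ):ℝ) * (φ t y) ^ (2-1) * px φ t y) * ψ t + (φ t y) ^ 2 * deriv ψ t) := by
            rw [hftc, hia]; ring
        _ ≤ ∫ t in (-R)..x, (1 + c₀) * K t y := by
            apply intervalIntegral.integral_mono_on hax.le
              (hcont'.intervalIntegrable _ _)
              ((continuous_const.mul (hKyc y)).intervalIntegrable _ _)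
            exact fun t _ => hpt t
        _ = ∫ t in Ioc (-R) x, (1 + c₀) * K t y := intervalIntegral.integral_of_le hax.le
        _ ≤ ∫ t, (1 + c₀) * K t y :=
            setIntegral_le_integral ((hKint_y y).const_mul _)
              (Filter.Eventually.of_forall fun t =>
                mul_nonneg (by linarith) (hKnn t y))
        _ = (1 + c₀) * F y := by rw [hFdef]; exact integral_const_mul _ _
  -- Lemma B : φ² ψ ≤ G x for y ∈ Ioo 0 L
  have hB : ∀ x : ℝ, ∀ y ∈ Ioo (0:ℝ) L, (φ x y) ^ 2 * ψ x ≤ G x := by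
    intro x y hy
    have hgd : ∀ s, HasDerivAt (fun s => (φ x s) ^ 2)
        (((2:ℕ):ℝ) * (φ x s) ^ (2-1) * py φ x s) s := fun s => (hpy x s).pow 2
    have hcont2 : Continuous (fun s => ((2:ℕ):ℝ) * (φ x s) ^ (2-1) * py φ x s) := by
      have hφxc : Continuous (fun s => φ x s) :=
        hΦc.comp (continuous_const.prodMk continuous_id)
      exact (continuous_const.mul (hφxc.pow _)).mul
        (hpyc.comp (continuous_const.prodMk continuous_id))
    have hftc : (∫ s in (0:ℝ)..y, ((2:ℕ):ℝ) * (φ x s) ^ (2-1) * py φ x s)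
        = (φ x y) ^ 2 - (φ x 0) ^ 2 :=
      intervalIntegral.integral_eq_sub_of_hasDerivAt
        (fun s _ => hgd s) (hcont2.intervalIntegrable _ _)
    have hc : Continuous (fun s => (py φ x s) ^ 2 + (φ x s) ^ 2) := by
      have h1 : Continuous (fun s => py φ x s) := hpyc.comp (continuous_const.prodMk continuous_id)
      have h2 : Continuous (fun s => φ x s) := hΦc.comp (continuous_const.prodMk continuous_id)
      exact (h1.pow 2).add (h2.pow 2)
    have hint2 : IntegrableOn (fun s => (py φ x s) ^ 2 + (φ x s) ^ 2) (Ioo 0 L) volume :=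
      (hc.integrableOn_Icc (a := 0) (b := L)).mono_set Ioo_subset_Icc_self
    have hstep1 : (φ x y) ^ 2 ≤ ∫ s in Ioo (0:ℝ) L, ((py φ x s) ^ 2 + (φ x s) ^ 2) := by
      calc (φ x y) ^ 2
          = ∫ s in (0:ℝ)..y, ((2:ℕ):ℝ) * (φ x s) ^ (2-1) * py φ x s := by
            rw [hftc, hφ.bc0 x]; ring
        _ ≤ ∫ s in (0:ℝ)..y, ((py φ x s) ^ 2 + (φ x s) ^ 2) := by
            apply intervalIntegral.integral_mono_on hy.1.le
              (hcont2.intervalIntegrable _ _)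
              (hc.intervalIntegrable _ _)
            intro s _
            push_cast
            nlinarith [sq_nonneg (φ x s - py φ x s)]
        _ = ∫ s in Ioc (0:ℝ) y, ((py φ x s) ^ 2 + (φ x s) ^ 2) :=
            intervalIntegral.integral_of_le hy.1.le
        _ ≤ ∫ s in Ioo (0:ℝ) L, ((py φ x s) ^ 2 + (φ x s) ^ 2) := by
            apply setIntegral_mono_set hint2
            · exact Filter.Eventually.of_forall fun s => by positivity
            · exact (HasSubset.Subset.eventuallyLE (Ioc_subset_Ioo_right hy.2)).mono
                (fun s hs => hs)
    calc (φ x y) ^ 2 * ψ x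
        ≤ (∫ s in Ioo (0:ℝ) L, ((py φ x s) ^ 2 + (φ x s) ^ 2)) * ψ x :=
          mul_le_mul_of_nonneg_right hstep1 (hψ.pos x).le
      _ = ∫ s in Ioo (0:ℝ) L, ((py φ x s) ^ 2 + (φ x s) ^ 2) * ψ x := by
          rw [← integral_mul_const]
      _ ≤ ∫ s in Ioo (0:ℝ) L, K x s := by
          apply setIntegral_mono_on (hint2.mul_const _) (hKint_x x) measurableSet_Ioo
          intro s _
          rw [hKdef]
          simp only
          nlinarith [sq_nonneg (px φ x s), (hψ.pos x).le,
            mul_nonneg (sq_nonneg (px φ x s)) (hψ.pos x).le]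
      _ = G x := rfl
  -- combine
  have key : ∀ x : ℝ, (∫ y, (φ x y) ^ 4 * ψ x ^ 2 ∂μ)
      ≤ ((1 + c₀) * (∫ y, F y ∂μ)) * G x := by
    intro x
    calc (∫ y, (φ x y) ^ 4 * ψ x ^ 2 ∂μ)
        ≤ ∫ y, ((1 + c₀) * F y) * G x ∂μ := by
          apply integral_mono_of_nonneg
          · exact Filter.Eventually.of_forall fun y => by positivity
          · exact (hFint.const_mul _).mul_const _
          · have hmem : ∀ᵐ y ∂μ, y ∈ Ioo (0:ℝ) L := by
              rw [hμdef]; exact ae_restrict_mem measurableSet_Ioo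
            filter_upwards [hmem] with y hy
            have h1 := hA x y
            have h2 := hB x y hy
            have hnn : 0 ≤ (φ x y) ^ 2 * ψ x := mul_nonneg (by positivity) (hψ.pos x).le
            calc (φ x y) ^ 4 * ψ x ^ 2
                = ((φ x y) ^ 2 * ψ x) * ((φ x y) ^ 2 * ψ x) := by ring
              _ ≤ ((1 + c₀) * F y) * G x := mul_le_mul h1 h2 hnn (hnn.trans h1)
      _ = ((1 + c₀) * (∫ y, F y ∂μ)) * G x := by
          rw [integral_mul_const, integral_const_mul]
  have hRHS : (∫ x : ℝ, ∫ y in Ioo (0:ℝ) L,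
      ((px φ x y) ^ 2 + (py φ x y) ^ 2 + (φ x y) ^ 2) * ψ x) = ∫ x, G x := rfl
  rw [hRHS]
  calc (∫ x : ℝ, ∫ y in Ioo (0:ℝ) L, (φ x y) ^ 4 * ψ x ^ 2)
      ≤ ∫ x, ((1 + c₀) * (∫ y, F y ∂μ)) * G x := by
        apply integral_mono_of_nonneg
        · exact Filter.Eventually.of_forall fun x =>
            integral_nonneg fun y => by positivity
        · exact hGint.const_mul _
        · exact Filter.Eventually.of_forall key
    _ = ((1 + c₀) * (∫ y, F y ∂μ)) * ∫ x, G x := integral_const_mul _ _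
    _ = (1 + c₀) * (∫ x, G x) ^ 2 := by rw [← hswap]; ring
end
end

section
/- There exists an absolute constant c > 0, independent of L, such that for every L > 0 and all continuously differentiable test functions u, v on the strip Σ: ∬_Σ |u v v_x| dx dy ≤ c ( ∬_Σ |Du|² dx dy )^{1/4} ( ∬_Σ u² dx dy )^{1/4} ( ∬_Σ |Dv|² dx dy )^{3/4} ( ∬_Σ v² dx dy )^{1/4}. -/
open MeasureTheory Real Set Filter Topology

noncomputable section

/-- A `C¹` test function on the strip `ℝ × (0, L)`. -/
structure IsC1TestFun (L : ℝ) (φ : ℝ → ℝ → ℝ) : Prop where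
  smooth : ContDiff ℝ 1 (fun p : ℝ × ℝ => φ p.1 p.2)
  supp : ∃ R > 0, ∀ x y : ℝ, R ≤ |x| → φ x y = 0
  bc0 : ∀ x : ℝ, φ x 0 = 0
  bcL : ∀ x : ℝ, φ x L = 0

-- derivative representation
lemma hasDerivAt_px {φ : ℝ → ℝ → ℝ} (h : ContDiff ℝ 1 (fun p : ℝ × ℝ => φ p.1 p.2))
    (x y : ℝ) : HasDerivAt (fun t => φ t y) (fderiv ℝ (fun p : ℝ × ℝ => φ p.1 p.2) (x, y) (1, 0)) x := by
  have hF : HasFDerivAt (fun p : ℝ × ℝ => φ p.1 p.2)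
      (fderiv ℝ (fun p : ℝ × ℝ => φ p.1 p.2) (x, y)) (x, y) :=
    (h.differentiable one_ne_zero (x, y)).hasFDerivAt
  have hg : HasDerivAt (fun t : ℝ => (t, y)) ((1:ℝ), (0:ℝ)) x :=
    (hasDerivAt_id x).prodMk (hasDerivAt_const x y)
  exact hF.comp_hasDerivAt x hg

lemma hasDerivAt_py {φ : ℝ → ℝ → ℝ} (h : ContDiff ℝ 1 (fun p : ℝ × ℝ => φ p.1 p.2))
    (x y : ℝ) : HasDerivAt (fun t => φ x t) (fderiv ℝ (fun p : ℝ × ℝ => φ p.1 p.2) (x, y) (0, 1)) y := by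
  have hF : HasFDerivAt (fun p : ℝ × ℝ => φ p.1 p.2)
      (fderiv ℝ (fun p : ℝ × ℝ => φ p.1 p.2) (x, y)) (x, y) :=
    (h.differentiable one_ne_zero (x, y)).hasFDerivAt
  have hg : HasDerivAt (fun t : ℝ => (x, t)) ((0:ℝ), (1:ℝ)) y :=
    (hasDerivAt_const y x).prodMk (hasDerivAt_id y)
  exact hF.comp_hasDerivAt y hg

lemma px_eq {φ : ℝ → ℝ → ℝ} (h : ContDiff ℝ 1 (fun p : ℝ × ℝ => φ p.1 p.2)) (x y : ℝ) :
    px φ x y = fderiv ℝ (fun p : ℝ × ℝ => φ p.1 p.2) (x, y) (1, 0) :=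
  (hasDerivAt_px h x y).deriv

lemma py_eq {φ : ℝ → ℝ → ℝ} (h : ContDiff ℝ 1 (fun p : ℝ × ℝ => φ p.1 p.2)) (x y : ℝ) :
    py φ x y = fderiv ℝ (fun p : ℝ × ℝ => φ p.1 p.2) (x, y) (0, 1) :=
  (hasDerivAt_py h x y).deriv

lemma continuous_px {φ : ℝ → ℝ → ℝ} (h : ContDiff ℝ 1 (fun p : ℝ × ℝ => φ p.1 p.2)) :
    Continuous (fun p : ℝ × ℝ => px φ p.1 p.2) := by
  have : (fun p : ℝ × ℝ => px φ p.1 p.2)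
      = fun p : ℝ × ℝ => fderiv ℝ (fun p : ℝ × ℝ => φ p.1 p.2) p ((1:ℝ), (0:ℝ)) := by
    ext p; exact px_eq h p.1 p.2
  rw [this]
  exact (h.continuous_fderiv one_ne_zero).clm_apply continuous_const

lemma continuous_py {φ : ℝ → ℝ → ℝ} (h : ContDiff ℝ 1 (fun p : ℝ × ℝ => φ p.1 p.2)) :
    Continuous (fun p : ℝ × ℝ => py φ p.1 p.2) := by
  have : (fun p : ℝ × ℝ => py φ p.1 p.2)
      = fun p : ℝ × ℝ => fderiv ℝ (fun p : ℝ × ℝ => φ p.1 p.2) p ((0:ℝ), (1:ℝ)) := by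
    ext p; exact py_eq h p.1 p.2
  rw [this]
  exact (h.continuous_fderiv one_ne_zero).clm_apply continuous_const


lemma hasDerivAt_px' {φ : ℝ → ℝ → ℝ} (h : ContDiff ℝ 1 (fun p : ℝ × ℝ => φ p.1 p.2))
    (x y : ℝ) : HasDerivAt (fun t => φ t y) (px φ x y) x := by
  rw [px_eq h]
  exact hasDerivAt_px h x y

lemma hasDerivAt_py' {φ : ℝ → ℝ → ℝ} (h : ContDiff ℝ 1 (fun p : ℝ × ℝ => φ p.1 p.2))
    (x y : ℝ) : HasDerivAt (fun t => φ x t) (py φ x y) y := by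
  rw [py_eq h]
  exact hasDerivAt_py h x y

-- one-sided vanishing of derivative
lemma deriv_zero_of_right {f : ℝ → ℝ} {d a : ℝ} (hf : HasDerivAt f d a)
    (h : ∀ t, a ≤ t → f t = 0) : d = 0 := by
  have h1 : Tendsto (slope f a) (𝓝[>] a) (𝓝 d) :=
    ((hasDerivAt_iff_tendsto_slope.1 hf).mono_left
      (nhdsWithin_mono a (fun t ht => ne_of_gt ht)))
  have h2 : Tendsto (slope f a) (𝓝[>] a) (𝓝 0) := by
    have : ∀ t ∈ Ioi a, slope f a t = 0 := by
      intro t ht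
      simp [slope, h t (le_of_lt ht), h a le_rfl]
    exact Tendsto.congr' (eventually_nhdsWithin_of_forall (fun t ht => (this t ht).symm))
      tendsto_const_nhds
  exact tendsto_nhds_unique h1 h2

lemma deriv_zero_of_left {f : ℝ → ℝ} {d a : ℝ} (hf : HasDerivAt f d a)
    (h : ∀ t, t ≤ a → f t = 0) : d = 0 := by
  have h1 : Tendsto (slope f a) (𝓝[<] a) (𝓝 d) :=
    ((hasDerivAt_iff_tendsto_slope.1 hf).mono_left
      (nhdsWithin_mono a (fun t ht => ne_of_lt ht)))
  have h2 : Tendsto (slope f a) (𝓝[<] a) (𝓝 0) := by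
    have : ∀ t ∈ Iio a, slope f a t = 0 := by
      intro t ht
      simp [slope, h t (le_of_lt ht), h a le_rfl]
    exact Tendsto.congr' (eventually_nhdsWithin_of_forall (fun t ht => (this t ht).symm))
      tendsto_const_nhds
  exact tendsto_nhds_unique h1 h2

-- Cauchy–Schwarz
lemma cs_abs {α : Type*} [MeasurableSpace α] {μ : Measure α} {f g : α → ℝ}
    (hf : AEStronglyMeasurable f μ) (hg : AEStronglyMeasurable g μ)
    (hf2 : Integrable (fun a => f a ^ 2) μ) (hg2 : Integrable (fun a => g a ^ 2) μ) :
    ∫ a, |f a * g a| ∂μ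
      ≤ (∫ a, f a ^ 2 ∂μ) ^ ((1:ℝ)/2) * (∫ a, g a ^ 2 ∂μ) ^ ((1:ℝ)/2) := by
  have hpq : Real.HolderConjugate 2 2 := Real.HolderConjugate.two_two
  have hmf : MemLp (fun a => |f a|) (ENNReal.ofReal 2) μ := by
    have : ENNReal.ofReal 2 = 2 := by norm_num
    rw [this]
    refine (memLp_two_iff_integrable_sq (by simpa [Real.norm_eq_abs] using hf.norm : AEStronglyMeasurable (fun a => |f a|) μ)).2 ?_
    simpa [sq_abs] using hf2
  have hmg : MemLp (fun a => |g a|) (ENNReal.ofReal 2) μ := by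
    have : ENNReal.ofReal 2 = 2 := by norm_num
    rw [this]
    refine (memLp_two_iff_integrable_sq (by simpa [Real.norm_eq_abs] using hg.norm : AEStronglyMeasurable (fun a => |g a|) μ)).2 ?_
    simpa [sq_abs] using hg2
  have := integral_mul_le_Lp_mul_Lq_of_nonneg hpq
    (Eventually.of_forall (fun a => abs_nonneg (f a)))
    (Eventually.of_forall (fun a => abs_nonneg (g a))) hmf hmg
  have e1 : ∀ a, |f a| * |g a| = |f a * g a| := fun a => (abs_mul _ _).symm
  have e2 : ∀ a, |f a| ^ (2:ℝ) = f a ^ 2 := by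
    intro a
    rw [show (2:ℝ) = ((2:ℕ):ℝ) by norm_num, Real.rpow_natCast, sq_abs]
  have e3 : ∀ a, |g a| ^ (2:ℝ) = g a ^ 2 := by
    intro a
    rw [show (2:ℝ) = ((2:ℕ):ℝ) by norm_num, Real.rpow_natCast, sq_abs]
  simp only [e1, e2, e3] at this
  exact this

-- integrability on the strip
lemma integrable_strip {L : ℝ} (hL : 0 < L) {f : ℝ × ℝ → ℝ} (hf : Continuous f)
    {R : ℝ} (h0 : ∀ p : ℝ × ℝ, R ≤ |p.1| → f p = 0) :
    Integrable f ((volume : Measure ℝ).prod (volume.restrict (Ioo 0 L))) := by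
  set ν : Measure ℝ := volume.restrict (Ioo 0 L) with hν
  set μ : Measure (ℝ × ℝ) := (volume : Measure ℝ).prod ν with hμ
  obtain ⟨C, hC⟩ := (isCompact_Icc.prod isCompact_Icc :
      IsCompact (Icc (-R) R ×ˢ Icc (0:ℝ) L)).exists_bound_of_continuousOn hf.continuousOn
  set C' := max C 0 with hC'
  have hC'0 : 0 ≤ C' := le_max_right _ _
  have hmeas : MeasurableSet (Icc (-R) R ×ˢ (univ : Set ℝ)) :=
    measurableSet_Icc.prod MeasurableSet.univ
  have hfin : μ (Icc (-R) R ×ˢ (univ : Set ℝ)) < ⊤ := by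
    rw [hμ, Measure.prod_prod]
    have h1 : (volume : Measure ℝ) (Icc (-R) R) < ⊤ := measure_Icc_lt_top
    have h2 : ν (univ : Set ℝ) < ⊤ := by
      rw [hν, Measure.restrict_apply MeasurableSet.univ, Set.univ_inter]
      exact measure_Ioo_lt_top
    exact ENNReal.mul_lt_top h1 h2
  have hg : Integrable ((Icc (-R) R ×ˢ (univ : Set ℝ)).indicator (fun _ => C')) μ := by
    rw [integrable_indicator_iff hmeas]
    exact integrableOn_const hfin.ne
  have hae : ∀ᵐ p ∂μ, p.2 ∈ Ioo (0:ℝ) L := by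
    rw [ae_iff]
    have : {p : ℝ × ℝ | ¬ p.2 ∈ Ioo (0:ℝ) L} = (univ : Set ℝ) ×ˢ (Ioo (0:ℝ) L)ᶜ := by
      ext p; simp
    rw [this, hμ, Measure.prod_prod, hν, Measure.restrict_apply (measurableSet_Ioo.compl)]
    simp
  refine Integrable.mono' hg hf.aestronglyMeasurable ?_
  filter_upwards [hae] with p hp
  by_cases hx : |p.1| ≤ R
  · have hpK : p ∈ Icc (-R) R ×ˢ Icc (0:ℝ) L := by
      constructor
      · exact abs_le.1 hx
      · exact ⟨le_of_lt hp.1, le_of_lt hp.2⟩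
    have : ‖f p‖ ≤ C := hC p hpK
    have hmem : p ∈ Icc (-R) R ×ˢ (univ : Set ℝ) := ⟨abs_le.1 hx, trivial⟩
    rw [Set.indicator_of_mem hmem]
    exact this.trans (le_max_left _ _)
  · have : f p = 0 := h0 p (le_of_not_ge hx)
    rw [this]
    simp only [norm_zero]
    exact Set.indicator_apply_nonneg (fun _ => hC'0)

lemma pt_y {L : ℝ} (hL : 0 < L) {φ : ℝ → ℝ → ℝ}
    (hsm : ContDiff ℝ 1 (fun p : ℝ × ℝ => φ p.1 p.2)) (hbc : ∀ x : ℝ, φ x 0 = 0)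
    (x : ℝ) {y : ℝ} (hy : y ∈ Icc (0:ℝ) L) :
    φ x y ^ 2 ≤ ∫ t in Ioo (0:ℝ) L, |2 * φ x t * py φ x t| := by
  have hφc : Continuous (fun t : ℝ => φ x t) :=
    hsm.continuous.comp (continuous_const.prodMk continuous_id)
  have hpyc : Continuous (fun t : ℝ => py φ x t) :=
    (continuous_py hsm).comp (continuous_const.prodMk continuous_id)
  have hg' : Continuous (fun t : ℝ => 2 * φ x t * py φ x t) :=
    (continuous_const.mul hφc).mul hpyc
  have hderiv : ∀ t ∈ uIcc (0:ℝ) y,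
      HasDerivAt (fun s => φ x s ^ 2) (2 * φ x t * py φ x t) t := by
    intro t _
    have := (hasDerivAt_py' hsm x t).fun_pow 2
    simpa [mul_comm, mul_assoc, mul_left_comm] using this
  have hint : IntervalIntegrable (fun t => 2 * φ x t * py φ x t) volume 0 y :=
    hg'.intervalIntegrable 0 y
  have hftc := intervalIntegral.integral_eq_sub_of_hasDerivAt hderiv hint
  rw [hbc x] at hftc
  have h1 : φ x y ^ 2 ≤ ∫ t in (0:ℝ)..y, |2 * φ x t * py φ x t| := by
    calc φ x y ^ 2 = ∫ t in (0:ℝ)..y, 2 * φ x t * py φ x t := by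
          rw [hftc]; ring
      _ ≤ |∫ t in (0:ℝ)..y, 2 * φ x t * py φ x t| := le_abs_self _
      _ ≤ ∫ t in (0:ℝ)..y, |2 * φ x t * py φ x t| :=
          intervalIntegral.abs_integral_le_integral_abs hy.1
  have h2 : (∫ t in (0:ℝ)..y, |2 * φ x t * py φ x t|)
      = ∫ t in Ioc (0:ℝ) y, |2 * φ x t * py φ x t| :=
    intervalIntegral.integral_of_le hy.1
  have h3 : (∫ t in Ioc (0:ℝ) y, |2 * φ x t * py φ x t|)
      ≤ ∫ t in Ioo (0:ℝ) L, |2 * φ x t * py φ x t| := by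
    apply setIntegral_mono_set
    · exact (hg'.abs.continuousOn.integrableOn_compact isCompact_Icc).mono_set Ioo_subset_Icc_self
    · exact Eventually.of_forall (fun t => abs_nonneg _)
    · rw [ae_le_set]
      refine measure_mono_null ?_ (measure_singleton L)
      intro t ht
      obtain ⟨⟨ht1, ht2⟩, ht3⟩ := ht
      simp only [mem_Ioo, not_and, not_lt] at ht3
      exact mem_singleton_iff.2 (le_antisymm (ht2.trans hy.2) (ht3 ht1))
  linarith [h1, h2 ▸ h1, h3]

lemma pt_x {φ : ℝ → ℝ → ℝ}
    (hsm : ContDiff ℝ 1 (fun p : ℝ × ℝ => φ p.1 p.2)) {R : ℝ} (hR : 0 < R)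
    (hsupp : ∀ x y : ℝ, R ≤ |x| → φ x y = 0) (x y : ℝ) :
    φ x y ^ 2 ≤ ∫ t : ℝ, |2 * φ t y * px φ t y| := by
  have hφc : Continuous (fun t : ℝ => φ t y) :=
    hsm.continuous.comp (continuous_id.prodMk continuous_const)
  have hpxc : Continuous (fun t : ℝ => px φ t y) :=
    (continuous_px hsm).comp (continuous_id.prodMk continuous_const)
  have hg' : Continuous (fun t : ℝ => 2 * φ t y * px φ t y) :=
    (continuous_const.mul hφc).mul hpxc
  have habs : Integrable (fun t : ℝ => |2 * φ t y * px φ t y|) volume := by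
    apply hg'.abs.integrable_of_hasCompactSupport
    apply HasCompactSupport.intro (isCompact_Icc (a := -R) (b := R))
    intro t ht
    have : R ≤ |t| := by
      have h' : -R ≤ t → R < t := by simpa [mem_Icc] using ht
      rcases lt_or_ge t (-R) with h | h
      · rw [abs_of_neg (by linarith)]; linarith
      · have := h' h; rw [abs_of_pos (by linarith)]; linarith
    simp [hsupp t y this]
  have hnn : 0 ≤ ∫ t : ℝ, |2 * φ t y * px φ t y| :=
    integral_nonneg (fun t => abs_nonneg _)
  by_cases hx : x ≤ -R
  · have : φ x y = 0 := hsupp x y (by rw [abs_of_neg (by linarith)]; linarith)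
    rw [this]; simpa using hnn
  push_neg at hx
  have hderiv : ∀ t ∈ uIcc (-R) x,
      HasDerivAt (fun s => φ s y ^ 2) (2 * φ t y * px φ t y) t := by
    intro t _
    have := (hasDerivAt_px' hsm t y).fun_pow 2
    simpa [mul_comm, mul_assoc, mul_left_comm] using this
  have hint : IntervalIntegrable (fun t => 2 * φ t y * px φ t y) volume (-R) x :=
    hg'.intervalIntegrable _ _
  have hftc := intervalIntegral.integral_eq_sub_of_hasDerivAt hderiv hint
  rw [hsupp (-R) y (by rw [abs_of_neg (by linarith)]; linarith)] at hftc
  have h1 : φ x y ^ 2 ≤ ∫ t in (-R)..x, |2 * φ t y * px φ t y| := by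
    calc φ x y ^ 2 = ∫ t in (-R)..x, 2 * φ t y * px φ t y := by rw [hftc]; ring
      _ ≤ |∫ t in (-R)..x, 2 * φ t y * px φ t y| := le_abs_self _
      _ ≤ ∫ t in (-R)..x, |2 * φ t y * px φ t y| :=
          intervalIntegral.abs_integral_le_integral_abs (le_of_lt hx)
  have h2 : (∫ t in (-R)..x, |2 * φ t y * px φ t y|)
      = ∫ t in Ioc (-R) x, |2 * φ t y * px φ t y| :=
    intervalIntegral.integral_of_le (le_of_lt hx)
  have h3 : (∫ t in Ioc (-R) x, |2 * φ t y * px φ t y|)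
      ≤ ∫ t : ℝ, |2 * φ t y * px φ t y| :=
    setIntegral_le_integral habs (Eventually.of_forall (fun t => abs_nonneg _))
  linarith [h2 ▸ h1]

lemma vanish_py {φ : ℝ → ℝ → ℝ} {R : ℝ}
    (hsupp : ∀ x y : ℝ, R ≤ |x| → φ x y = 0) (x y : ℝ) (hx : R ≤ |x|) :
    py φ x y = 0 := by
  have : (fun t => φ x t) = fun _ => (0:ℝ) := funext (fun t => hsupp x t hx)
  rw [py, this, deriv_const]

lemma vanish_px {φ : ℝ → ℝ → ℝ}
    (hsm : ContDiff ℝ 1 (fun p : ℝ × ℝ => φ p.1 p.2)) {R : ℝ} (hR : 0 < R)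
    (hsupp : ∀ x y : ℝ, R ≤ |x| → φ x y = 0) (x y : ℝ) (hx : R ≤ |x|) :
    px φ x y = 0 := by
  rcases eq_or_lt_of_le hx with heq | hlt
  · rcases (abs_eq (le_of_lt hR)).1 heq.symm with h1 | h1
    · subst h1
      refine deriv_zero_of_right (hasDerivAt_px' hsm _ y) (fun t ht => ?_)
      exact hsupp t y (by rw [abs_of_pos (lt_of_lt_of_le hR ht)]; exact ht)
    · subst h1
      refine deriv_zero_of_left (hasDerivAt_px' hsm _ y) (fun t ht => ?_)
      refine hsupp t y ?_
      rw [abs_of_neg (by linarith : t < 0)]; linarith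
  · have hopen : IsOpen {t : ℝ | R < |t|} := isOpen_lt continuous_const continuous_abs
    have hev : (fun t => φ t y) =ᶠ[nhds x] fun _ => (0:ℝ) := by
      filter_upwards [hopen.mem_nhds hlt] with t ht
      exact hsupp t y (le_of_lt ht)
    rw [px, hev.deriv_eq, deriv_const]

lemma ae_snd_mem {L : ℝ} :
    ∀ᵐ p ∂((volume : Measure ℝ).prod (volume.restrict (Ioo 0 L))), p.2 ∈ Ioo (0:ℝ) L := by
  rw [ae_iff]
  have : {p : ℝ × ℝ | ¬ p.2 ∈ Ioo (0:ℝ) L} = (univ : Set ℝ) ×ˢ (Ioo (0:ℝ) L)ᶜ := by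
    ext p; simp
  rw [this, Measure.prod_prod, Measure.restrict_apply (measurableSet_Ioo.compl)]
  simp

lemma lady {L : ℝ} (hL : 0 < L) {φ : ℝ → ℝ → ℝ}
    (hsm : ContDiff ℝ 1 (fun p : ℝ × ℝ => φ p.1 p.2)) (hbc : ∀ x : ℝ, φ x 0 = 0)
    {R : ℝ} (hR : 0 < R) (hsupp : ∀ x y : ℝ, R ≤ |x| → φ x y = 0) :
    ∫ p : ℝ × ℝ, φ p.1 p.2 ^ 4 ∂((volume : Measure ℝ).prod (volume.restrict (Ioo 0 L)))
      ≤ 2 * (∫ p : ℝ × ℝ, φ p.1 p.2 ^ 2 ∂((volume : Measure ℝ).prod (volume.restrict (Ioo 0 L))))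
          * (∫ p : ℝ × ℝ, (px φ p.1 p.2 ^ 2 + py φ p.1 p.2 ^ 2)
              ∂((volume : Measure ℝ).prod (volume.restrict (Ioo 0 L)))) := by
  set ν : Measure ℝ := volume.restrict (Ioo 0 L) with hν
  set μ : Measure (ℝ × ℝ) := (volume : Measure ℝ).prod ν with hμ
  have cφ : Continuous (fun p : ℝ × ℝ => φ p.1 p.2) := hsm.continuous
  have cpx : Continuous (fun p : ℝ × ℝ => px φ p.1 p.2) := continuous_px hsm
  have cpy : Continuous (fun p : ℝ × ℝ => py φ p.1 p.2) := continuous_py hsm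
  set H : ℝ × ℝ → ℝ := fun p => |2 * φ p.1 p.2 * px φ p.1 p.2| with hH
  set G : ℝ × ℝ → ℝ := fun p => |2 * φ p.1 p.2 * py φ p.1 p.2| with hG
  have hHi : Integrable H μ :=
    integrable_strip (R := R) hL (((continuous_const.mul cφ).mul cpx).abs)
      (fun p hp => by simp [hH, hsupp p.1 p.2 hp])
  have hGi : Integrable G μ :=
    integrable_strip (R := R) hL (((continuous_const.mul cφ).mul cpy).abs)
      (fun p hp => by simp [hG, hsupp p.1 p.2 hp])
  have hφ2 : Integrable (fun p : ℝ × ℝ => φ p.1 p.2 ^ 2) μ :=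
    integrable_strip (R := R) hL (cφ.pow 2) (fun p hp => by simp [hsupp p.1 p.2 hp])
  have hφ4 : Integrable (fun p : ℝ × ℝ => φ p.1 p.2 ^ 4) μ :=
    integrable_strip (R := R) hL (cφ.pow 4) (fun p hp => by simp [hsupp p.1 p.2 hp])
  have hpx2 : Integrable (fun p : ℝ × ℝ => px φ p.1 p.2 ^ 2) μ :=
    integrable_strip (R := R) hL (cpx.pow 2) (fun p hp => by simp [vanish_px hsm hR hsupp p.1 p.2 hp])
  have hpy2 : Integrable (fun p : ℝ × ℝ => py φ p.1 p.2 ^ 2) μ :=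
    integrable_strip (R := R) hL (cpy.pow 2) (fun p hp => by simp [vanish_py hsupp p.1 p.2 hp])
  set A : ℝ → ℝ := fun y => ∫ x : ℝ, H (x, y) with hA
  set B : ℝ → ℝ := fun x => ∫ y : ℝ, G (x, y) ∂ν with hB
  have hAi : Integrable A ν := hHi.integral_prod_right
  have hBi : Integrable B volume := hGi.integral_prod_left
  have hABi : Integrable (fun p : ℝ × ℝ => B p.1 * A p.2) μ := hBi.mul_prod hAi
  -- step 1: pointwise bound
  have step1 : ∫ p : ℝ × ℝ, φ p.1 p.2 ^ 4 ∂μ ≤ ∫ p : ℝ × ℝ, B p.1 * A p.2 ∂μ := by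
    refine integral_mono_of_nonneg (Eventually.of_forall (fun p => by positivity)) hABi ?_
    filter_upwards [ae_snd_mem (L := L)] with p hp
    have h1 : φ p.1 p.2 ^ 2 ≤ B p.1 := pt_y hL hsm hbc p.1 (Ioo_subset_Icc_self hp)
    have h2 : φ p.1 p.2 ^ 2 ≤ A p.2 := pt_x hsm hR hsupp p.1 p.2
    calc φ p.1 p.2 ^ 4 = φ p.1 p.2 ^ 2 * φ p.1 p.2 ^ 2 := by ring
      _ ≤ B p.1 * A p.2 :=
          mul_le_mul h1 h2 (sq_nonneg _) (le_trans (sq_nonneg _) h1)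
  -- step 2: separate
  have step2 : ∫ p : ℝ × ℝ, B p.1 * A p.2 ∂μ = (∫ x : ℝ, B x) * (∫ y : ℝ, A y ∂ν) :=
    integral_prod_mul B A
  -- step 3
  have step3 : (∫ x : ℝ, B x) = ∫ p : ℝ × ℝ, G p ∂μ := by
    rw [hB]
    exact (integral_integral (f := fun x y => G (x, y)) (by exact hGi)).trans
      (by rw [hμ])
  have step4 : (∫ y : ℝ, A y ∂ν) = ∫ p : ℝ × ℝ, H p ∂μ := by
    rw [hA]
    have hswap := integral_integral_swap (f := fun x y => H (x, y)) (by exact hHi)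
    rw [← hswap]
    exact (integral_integral (f := fun x y => H (x, y)) (by exact hHi)).trans (by rw [hμ])
  -- step 5 : CS bounds
  have habs2 : ∀ (a b : ℝ), |2 * a * b| = 2 * |a * b| := by
    intro a b; rw [mul_assoc, abs_mul, abs_two]
  have hGint : ∫ p : ℝ × ℝ, G p ∂μ = 2 * ∫ p : ℝ × ℝ, |φ p.1 p.2 * py φ p.1 p.2| ∂μ := by
    simp_rw [hG, habs2]
    exact integral_const_mul 2 _
  have hHint : ∫ p : ℝ × ℝ, H p ∂μ = 2 * ∫ p : ℝ × ℝ, |φ p.1 p.2 * px φ p.1 p.2| ∂μ := by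
    simp_rw [hH, habs2]
    exact integral_const_mul 2 _
  set X := ∫ p : ℝ × ℝ, φ p.1 p.2 ^ 2 ∂μ with hX
  set Y := ∫ p : ℝ × ℝ, px φ p.1 p.2 ^ 2 ∂μ with hY
  set Z := ∫ p : ℝ × ℝ, py φ p.1 p.2 ^ 2 ∂μ with hZ
  have hXnn : 0 ≤ X := integral_nonneg (fun p => sq_nonneg _)
  have hYnn : 0 ≤ Y := integral_nonneg (fun p => sq_nonneg _)
  have hZnn : 0 ≤ Z := integral_nonneg (fun p => sq_nonneg _)
  have csx : ∫ p : ℝ × ℝ, |φ p.1 p.2 * px φ p.1 p.2| ∂μ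
      ≤ X ^ ((1:ℝ)/2) * Y ^ ((1:ℝ)/2) :=
    cs_abs cφ.aestronglyMeasurable cpx.aestronglyMeasurable hφ2 hpx2
  have csy : ∫ p : ℝ × ℝ, |φ p.1 p.2 * py φ p.1 p.2| ∂μ
      ≤ X ^ ((1:ℝ)/2) * Z ^ ((1:ℝ)/2) :=
    cs_abs cφ.aestronglyMeasurable cpy.aestronglyMeasurable hφ2 hpy2
  have hGnn : 0 ≤ ∫ p : ℝ × ℝ, G p ∂μ := integral_nonneg (fun p => abs_nonneg _)
  have hHnn : 0 ≤ ∫ p : ℝ × ℝ, H p ∂μ := integral_nonneg (fun p => abs_nonneg _)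
  -- combine
  have hGb : ∫ p : ℝ × ℝ, G p ∂μ ≤ 2 * (X ^ ((1:ℝ)/2) * Z ^ ((1:ℝ)/2)) := by
    rw [hGint]; linarith
  have hHb : ∫ p : ℝ × ℝ, H p ∂μ ≤ 2 * (X ^ ((1:ℝ)/2) * Y ^ ((1:ℝ)/2)) := by
    rw [hHint]; linarith
  have main : ∫ p : ℝ × ℝ, φ p.1 p.2 ^ 4 ∂μ
      ≤ 4 * (X ^ ((1:ℝ)/2) * X ^ ((1:ℝ)/2)) * (Y ^ ((1:ℝ)/2) * Z ^ ((1:ℝ)/2)) := by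
    calc ∫ p : ℝ × ℝ, φ p.1 p.2 ^ 4 ∂μ
        ≤ (∫ x : ℝ, B x) * (∫ y : ℝ, A y ∂ν) := step2 ▸ step1
      _ = (∫ p : ℝ × ℝ, G p ∂μ) * (∫ p : ℝ × ℝ, H p ∂μ) := by rw [step3, step4]
      _ ≤ (2 * (X ^ ((1:ℝ)/2) * Z ^ ((1:ℝ)/2))) * (2 * (X ^ ((1:ℝ)/2) * Y ^ ((1:ℝ)/2))) :=
          mul_le_mul hGb hHb hHnn (by positivity)
      _ = 4 * (X ^ ((1:ℝ)/2) * X ^ ((1:ℝ)/2)) * (Y ^ ((1:ℝ)/2) * Z ^ ((1:ℝ)/2)) := by ring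
  have hXX : X ^ ((1:ℝ)/2) * X ^ ((1:ℝ)/2) = X := by
    rw [← Real.rpow_add' hXnn (by norm_num)]; norm_num
  have hYZ : Y ^ ((1:ℝ)/2) * Z ^ ((1:ℝ)/2) ≤ (Y + Z) / 2 := by
    have hy2 : (Y ^ ((1:ℝ)/2)) ^ 2 = Y := by
      rw [← Real.rpow_natCast (Y ^ ((1:ℝ)/2)) 2, ← Real.rpow_mul hYnn]; norm_num
    have hz2 : (Z ^ ((1:ℝ)/2)) ^ 2 = Z := by
      rw [← Real.rpow_natCast (Z ^ ((1:ℝ)/2)) 2, ← Real.rpow_mul hZnn]; norm_num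
    nlinarith [sq_nonneg (Y ^ ((1:ℝ)/2) - Z ^ ((1:ℝ)/2))]
  have hsum : ∫ p : ℝ × ℝ, (px φ p.1 p.2 ^ 2 + py φ p.1 p.2 ^ 2) ∂μ = Y + Z :=
    integral_add hpx2 hpy2
  rw [hsum]
  calc ∫ p : ℝ × ℝ, φ p.1 p.2 ^ 4 ∂μ
      ≤ 4 * (X ^ ((1:ℝ)/2) * X ^ ((1:ℝ)/2)) * (Y ^ ((1:ℝ)/2) * Z ^ ((1:ℝ)/2)) := main
    _ = 4 * X * (Y ^ ((1:ℝ)/2) * Z ^ ((1:ℝ)/2)) := by rw [hXX]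
    _ ≤ 4 * X * ((Y + Z) / 2) := by
        apply mul_le_mul_of_nonneg_left hYZ (by positivity)
    _ = 2 * X * (Y + Z) := by ring

lemma rpow_half_pow4 {x : ℝ} (hx : 0 ≤ x) : (x ^ ((1:ℝ)/2)) ^ (4:ℕ) = x ^ (2:ℕ) := by
  rw [← Real.rpow_natCast (x ^ ((1:ℝ)/2)) 4, ← Real.rpow_mul hx,
    ← Real.rpow_natCast x 2]
  norm_num

lemma rpow_half_sq {x : ℝ} (hx : 0 ≤ x) : (x ^ ((1:ℝ)/2)) ^ (2:ℕ) = x := by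
  rw [← Real.rpow_natCast (x ^ ((1:ℝ)/2)) 2, ← Real.rpow_mul hx]
  norm_num

lemma rpow_quarter_pow4 {x : ℝ} (hx : 0 ≤ x) : (x ^ ((1:ℝ)/4)) ^ (4:ℕ) = x := by
  rw [← Real.rpow_natCast (x ^ ((1:ℝ)/4)) 4, ← Real.rpow_mul hx]
  norm_num

lemma rpow_3quarter_pow4 {x : ℝ} (hx : 0 ≤ x) : (x ^ ((3:ℝ)/4)) ^ (4:ℕ) = x ^ (3:ℕ) := by
  rw [← Real.rpow_natCast (x ^ ((3:ℝ)/4)) 4, ← Real.rpow_mul hx,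
    ← Real.rpow_natCast x 3]
  norm_num


set_option maxHeartbeats 2000000 in
/-- Trilinear estimate on the strip with an absolute constant, uniform in `L`. -/
theorem trilinear_estimate :
    ∃ c > 0, ∀ L : ℝ, 0 < L → ∀ u v : ℝ → ℝ → ℝ,
      IsC1TestFun L u → IsC1TestFun L v →
      (∫ x : ℝ, ∫ y in Ioo (0:ℝ) L, |u x y * v x y * px v x y|)
        ≤ c * (∫ x : ℝ, ∫ y in Ioo (0:ℝ) L, ((px u x y) ^ 2 + (py u x y) ^ 2)) ^ ((1:ℝ) / 4)
            * (∫ x : ℝ, ∫ y in Ioo (0:ℝ) L, (u x y) ^ 2) ^ ((1:ℝ) / 4)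
            * (∫ x : ℝ, ∫ y in Ioo (0:ℝ) L, ((px v x y) ^ 2 + (py v x y) ^ 2)) ^ ((3:ℝ) / 4)
            * (∫ x : ℝ, ∫ y in Ioo (0:ℝ) L, (v x y) ^ 2) ^ ((1:ℝ) / 4) := by
  refine ⟨2, two_pos, ?_⟩
  intro L hL u v hu hv
  obtain ⟨Ru, hRu, hsu⟩ := hu.supp
  obtain ⟨Rv, hRv, hsv⟩ := hv.supp
  set ν : Measure ℝ := volume.restrict (Ioo 0 L) with hν
  set μ : Measure (ℝ × ℝ) := (volume : Measure ℝ).prod ν with hμ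
  have cu : Continuous (fun p : ℝ × ℝ => u p.1 p.2) := hu.smooth.continuous
  have cv : Continuous (fun p : ℝ × ℝ => v p.1 p.2) := hv.smooth.continuous
  have cpxu : Continuous (fun p : ℝ × ℝ => px u p.1 p.2) := continuous_px hu.smooth
  have cpyu : Continuous (fun p : ℝ × ℝ => py u p.1 p.2) := continuous_py hu.smooth
  have cpxv : Continuous (fun p : ℝ × ℝ => px v p.1 p.2) := continuous_px hv.smooth
  have cpyv : Continuous (fun p : ℝ × ℝ => py v p.1 p.2) := continuous_py hv.smooth
  -- integrability of all relevant functions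
  have h1i : Integrable (fun p : ℝ × ℝ => |u p.1 p.2 * v p.1 p.2 * px v p.1 p.2|) μ :=
    integrable_strip (R := Ru) hL (((cu.mul cv).mul cpxv).abs)
      (fun p hp => by simp [hsu p.1 p.2 hp])
  have h2i : Integrable (fun p : ℝ × ℝ => px u p.1 p.2 ^ 2 + py u p.1 p.2 ^ 2) μ :=
    integrable_strip (R := Ru) hL ((cpxu.pow 2).add (cpyu.pow 2))
      (fun p hp => by simp [vanish_px hu.smooth hRu hsu p.1 p.2 hp,
        vanish_py hsu p.1 p.2 hp])
  have h3i : Integrable (fun p : ℝ × ℝ => u p.1 p.2 ^ 2) μ :=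
    integrable_strip (R := Ru) hL (cu.pow 2) (fun p hp => by simp [hsu p.1 p.2 hp])
  have h4i : Integrable (fun p : ℝ × ℝ => px v p.1 p.2 ^ 2 + py v p.1 p.2 ^ 2) μ :=
    integrable_strip (R := Rv) hL ((cpxv.pow 2).add (cpyv.pow 2))
      (fun p hp => by simp [vanish_px hv.smooth hRv hsv p.1 p.2 hp,
        vanish_py hsv p.1 p.2 hp])
  have h5i : Integrable (fun p : ℝ × ℝ => v p.1 p.2 ^ 2) μ :=
    integrable_strip (R := Rv) hL (cv.pow 2) (fun p hp => by simp [hsv p.1 p.2 hp])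
  have huv2 : Integrable (fun p : ℝ × ℝ => (u p.1 p.2 * v p.1 p.2) ^ 2) μ :=
    integrable_strip (R := Ru) hL ((cu.mul cv).pow 2)
      (fun p hp => by simp [hsu p.1 p.2 hp])
  have hvx2 : Integrable (fun p : ℝ × ℝ => px v p.1 p.2 ^ 2) μ :=
    integrable_strip (R := Rv) hL (cpxv.pow 2)
      (fun p hp => by simp [vanish_px hv.smooth hRv hsv p.1 p.2 hp])
  have hu22 : Integrable (fun p : ℝ × ℝ => (u p.1 p.2 ^ 2) ^ 2) μ :=
    integrable_strip (R := Ru) hL ((cu.pow 2).pow 2)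
      (fun p hp => by simp [hsu p.1 p.2 hp])
  have hv22 : Integrable (fun p : ℝ × ℝ => (v p.1 p.2 ^ 2) ^ 2) μ :=
    integrable_strip (R := Rv) hL ((cv.pow 2).pow 2)
      (fun p hp => by simp [hsv p.1 p.2 hp])
  -- convert iterated integrals
  have e1 : (∫ x : ℝ, ∫ y in Ioo (0:ℝ) L, |u x y * v x y * px v x y|)
      = ∫ p : ℝ × ℝ, |u p.1 p.2 * v p.1 p.2 * px v p.1 p.2| ∂μ :=
    integral_integral (by exact h1i)
  have e2 : (∫ x : ℝ, ∫ y in Ioo (0:ℝ) L, ((px u x y) ^ 2 + (py u x y) ^ 2))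
      = ∫ p : ℝ × ℝ, (px u p.1 p.2 ^ 2 + py u p.1 p.2 ^ 2) ∂μ :=
    integral_integral (by exact h2i)
  have e3 : (∫ x : ℝ, ∫ y in Ioo (0:ℝ) L, (u x y) ^ 2)
      = ∫ p : ℝ × ℝ, u p.1 p.2 ^ 2 ∂μ :=
    integral_integral (by exact h3i)
  have e4 : (∫ x : ℝ, ∫ y in Ioo (0:ℝ) L, ((px v x y) ^ 2 + (py v x y) ^ 2))
      = ∫ p : ℝ × ℝ, (px v p.1 p.2 ^ 2 + py v p.1 p.2 ^ 2) ∂μ :=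
    integral_integral (by exact h4i)
  have e5 : (∫ x : ℝ, ∫ y in Ioo (0:ℝ) L, (v x y) ^ 2)
      = ∫ p : ℝ × ℝ, v p.1 p.2 ^ 2 ∂μ :=
    integral_integral (by exact h5i)
  rw [e1, e2, e3, e4, e5]
  set a := ∫ p : ℝ × ℝ, u p.1 p.2 ^ 2 ∂μ with ha
  set b := ∫ p : ℝ × ℝ, (px u p.1 p.2 ^ 2 + py u p.1 p.2 ^ 2) ∂μ with hb
  set c2 := ∫ p : ℝ × ℝ, v p.1 p.2 ^ 2 ∂μ with hc2
  set d := ∫ p : ℝ × ℝ, (px v p.1 p.2 ^ 2 + py v p.1 p.2 ^ 2) ∂μ with hd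
  set W := ∫ p : ℝ × ℝ, (u p.1 p.2 * v p.1 p.2) ^ 2 ∂μ with hW
  set P := ∫ p : ℝ × ℝ, (u p.1 p.2 ^ 2) ^ 2 ∂μ with hP
  set Q := ∫ p : ℝ × ℝ, (v p.1 p.2 ^ 2) ^ 2 ∂μ with hQ
  set E0 := ∫ p : ℝ × ℝ, px v p.1 p.2 ^ 2 ∂μ with hE0
  have hann : 0 ≤ a := integral_nonneg (fun p => sq_nonneg _)
  have hbnn : 0 ≤ b := integral_nonneg (fun p => by positivity)
  have hcnn : 0 ≤ c2 := integral_nonneg (fun p => sq_nonneg _)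
  have hdnn : 0 ≤ d := integral_nonneg (fun p => by positivity)
  have hWnn : 0 ≤ W := integral_nonneg (fun p => sq_nonneg _)
  have hPnn : 0 ≤ P := integral_nonneg (fun p => sq_nonneg _)
  have hQnn : 0 ≤ Q := integral_nonneg (fun p => sq_nonneg _)
  have hEnn : 0 ≤ E0 := integral_nonneg (fun p => sq_nonneg _)
  -- step 1 : Cauchy-Schwarz
  have cs1 : (∫ p : ℝ × ℝ, |u p.1 p.2 * v p.1 p.2 * px v p.1 p.2| ∂μ)
      ≤ W ^ ((1:ℝ)/2) * E0 ^ ((1:ℝ)/2) :=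
    cs_abs (cu.mul cv).aestronglyMeasurable cpxv.aestronglyMeasurable huv2 hvx2
  -- step 2 : Cauchy-Schwarz again
  have cs2 : W ≤ P ^ ((1:ℝ)/2) * Q ^ ((1:ℝ)/2) := by
    have heq : W = ∫ p : ℝ × ℝ, |u p.1 p.2 ^ 2 * v p.1 p.2 ^ 2| ∂μ := by
      rw [hW]
      congr 1
      funext p
      rw [abs_of_nonneg (by positivity)]
      ring
    rw [heq]
    exact cs_abs (cu.pow 2).aestronglyMeasurable (cv.pow 2).aestronglyMeasurable hu22 hv22
  -- step 3 : ladies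
  have ladyu : P ≤ 2 * a * b := by
    have := lady hL hu.smooth hu.bc0 hRu hsu
    have heq : (fun p : ℝ × ℝ => (u p.1 p.2 ^ 2) ^ 2) = fun p : ℝ × ℝ => u p.1 p.2 ^ 4 := by
      funext p; ring
    rw [hP, heq]
    exact this
  have ladyv : Q ≤ 2 * c2 * d := by
    have := lady hL hv.smooth hv.bc0 hRv hsv
    have heq : (fun p : ℝ × ℝ => (v p.1 p.2 ^ 2) ^ 2) = fun p : ℝ × ℝ => v p.1 p.2 ^ 4 := by
      funext p; ring
    rw [hQ, heq]
    exact this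
  have hE : E0 ≤ d :=
    integral_mono hvx2 h4i (fun p => le_add_of_nonneg_right (sq_nonneg _))
  -- final numeric assembly
  have hTnn : 0 ≤ 2 * b ^ ((1:ℝ)/4) * a ^ ((1:ℝ)/4) * d ^ ((3:ℝ)/4) * c2 ^ ((1:ℝ)/4) := by
    have := Real.rpow_nonneg hbnn ((1:ℝ)/4)
    have := Real.rpow_nonneg hann ((1:ℝ)/4)
    have := Real.rpow_nonneg hdnn ((3:ℝ)/4)
    have := Real.rpow_nonneg hcnn ((1:ℝ)/4)
    positivity
  refine le_trans cs1 ?_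
  refine le_of_pow_le_pow_left₀ (by norm_num : (4:ℕ) ≠ 0) hTnn ?_
  have hM4 : (W ^ ((1:ℝ)/2) * E0 ^ ((1:ℝ)/2)) ^ (4:ℕ) = W ^ (2:ℕ) * E0 ^ (2:ℕ) := by
    rw [mul_pow, rpow_half_pow4 hWnn, rpow_half_pow4 hEnn]
  have hT4 : (2 * b ^ ((1:ℝ)/4) * a ^ ((1:ℝ)/4) * d ^ ((3:ℝ)/4) * c2 ^ ((1:ℝ)/4)) ^ (4:ℕ)
      = 16 * b * a * d ^ (3:ℕ) * c2 := by
    rw [mul_pow, mul_pow, mul_pow, mul_pow, rpow_quarter_pow4 hbnn, rpow_quarter_pow4 hann,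
      rpow_3quarter_pow4 hdnn, rpow_quarter_pow4 hcnn]
    norm_num
  rw [hM4, hT4]
  have hW2 : W ^ (2:ℕ) ≤ P * Q := by
    calc W ^ (2:ℕ) ≤ (P ^ ((1:ℝ)/2) * Q ^ ((1:ℝ)/2)) ^ (2:ℕ) := pow_le_pow_left₀ hWnn cs2 2
      _ = P * Q := by rw [mul_pow, rpow_half_sq hPnn, rpow_half_sq hQnn]
  have hE2 : E0 ^ (2:ℕ) ≤ d ^ (2:ℕ) := pow_le_pow_left₀ hEnn hE 2
  calc W ^ (2:ℕ) * E0 ^ (2:ℕ)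
      ≤ (P * Q) * d ^ (2:ℕ) :=
        mul_le_mul hW2 hE2 (pow_nonneg hEnn 2) (mul_nonneg hPnn hQnn)
    _ ≤ ((2 * a * b) * (2 * c2 * d)) * d ^ (2:ℕ) := by
        refine mul_le_mul_of_nonneg_right ?_ (pow_nonneg hdnn 2)
        exact mul_le_mul ladyu ladyv hQnn (by positivity)
    _ = 4 * (a * b * c2 * d ^ (3:ℕ)) := by ring
    _ ≤ 16 * b * a * d ^ (3:ℕ) * c2 := by nlinarith [mul_nonneg (mul_nonneg (mul_nonneg hann hbnn) hcnn) (pow_nonneg hdnn 3)]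
end
end
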